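/- arXiv:1203.4306 — 8 statements merged into one kernel-verified Lean document; each statement's English description precedes it below -/
import Mathlib

section
/- Let γ > 1, α > 0, ρ̄ ≥ 0, M > 0 and T > 0. Suppose ρ, u : [−M, M] × [0, T] → ℝ are twice continuously differentiable, ρ(x,t) > 0 everywhere, the equations ρ_t + (ρu)_x = 0 and (ρu)_t + (ρu² + ρ^γ)_x = (ρ^α u_x)_x hold pointwise, and u(−M, t) = u(M, t) = 0 for all t ∈ [0, T]. Then for every t ∈ [0, T], ∫_{−M}^{M} [ (α/2)·ρ·(u + ρ^{α−2}ρ_x)² + (1/2)·ρ·u² + (α+1)·ρ·Ψ(ρ, ρ̄) ](x, t) dx + ∫_0^t ∫_{−M}^{M} [ ρ^α·(u_x)² + α·γ·ρ^{γ+α−3}·(ρ_x)² ](x, s) dx ds = ∫_{−M}^{M} [ (α/2)·ρ·(u + ρ^{α−2}ρ_x)² + (1/2)·ρ·u² + (α+1)·ρ·Ψ(ρ, ρ̄) ](x, 0) dx. -/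
open Real MeasureTheory intervalIntegral

/-- Partial derivative in the first (space) variable. -/
noncomputable def pderivX (f : ℝ → ℝ → ℝ) (x t : ℝ) : ℝ := deriv (fun y => f y t) x

/-- Partial derivative in the second (time) variable. -/
noncomputable def pderivT (f : ℝ → ℝ → ℝ) (x t : ℝ) : ℝ := deriv (fun s => f x s) t

/-- The pressure potential `Ψ(ρ, ρ̄)` for the pressure law `P(ρ) = ρ^γ`. -/
noncomputable def psi (γ ρ ρb : ℝ) : ℝ :=
  (1 / ((γ - 1) * ρ)) * (ρ ^ γ - ρb ^ γ - γ * ρb ^ (γ - 1) * (ρ - ρb))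

section NSProofAux
open Real MeasureTheory intervalIntegral Set Topology Filter

section Reg
variable {a b c d : ℝ} {F : ℝ × ℝ → ℝ}

/-- slice derivative in x -/
lemma reg_slice_x (hab : a < b) (hcd : c < d)
    (h : ContDiffOn ℝ 2 F ((Icc a b) ×ˢ (Icc c d)))
    {x t : ℝ} (hx : x ∈ Ioo a b) (ht : t ∈ Icc c d) :
    HasDerivAt (fun y => F (y, t))
      (fderivWithin ℝ F ((Icc a b) ×ˢ (Icc c d)) (x, t) (1, 0)) x := by
  have hp : (x, t) ∈ (Icc a b) ×ˢ (Icc c d) := ⟨Ioo_subset_Icc_self hx, ht⟩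
  have hdw : HasFDerivWithinAt F (fderivWithin ℝ F ((Icc a b) ×ˢ (Icc c d)) (x, t))
      ((Icc a b) ×ˢ (Icc c d)) (x, t) :=
    (h.differentiableOn (by norm_num) (x, t) hp).hasFDerivWithinAt
  have hline : HasDerivWithinAt (fun y : ℝ => (y, t)) ((1 : ℝ), (0 : ℝ)) (Icc a b) x :=
    ((hasDerivAt_id x).prodMk (hasDerivAt_const x t)).hasDerivWithinAt
  have := hdw.comp_hasDerivWithinAt x hline (fun y (hy : y ∈ Icc a b) => (⟨hy, ht⟩ : (y, t) ∈ (Icc a b) ×ˢ (Icc c d)))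
  exact this.hasDerivAt (Icc_mem_nhds hx.1 hx.2)

/-- slice derivative in t -/
lemma reg_slice_t (hab : a < b) (hcd : c < d)
    (h : ContDiffOn ℝ 2 F ((Icc a b) ×ˢ (Icc c d)))
    {x t : ℝ} (hx : x ∈ Icc a b) (ht : t ∈ Ioo c d) :
    HasDerivAt (fun s => F (x, s))
      (fderivWithin ℝ F ((Icc a b) ×ˢ (Icc c d)) (x, t) (0, 1)) t := by
  have hp : (x, t) ∈ (Icc a b) ×ˢ (Icc c d) := ⟨hx, Ioo_subset_Icc_self ht⟩
  have hdw : HasFDerivWithinAt F (fderivWithin ℝ F ((Icc a b) ×ˢ (Icc c d)) (x, t))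
      ((Icc a b) ×ˢ (Icc c d)) (x, t) :=
    (h.differentiableOn (by norm_num) (x, t) hp).hasFDerivWithinAt
  have hline : HasDerivWithinAt (fun s : ℝ => (x, s)) ((0 : ℝ), (1 : ℝ)) (Icc c d) t :=
    ((hasDerivAt_const t x).prodMk (hasDerivAt_id t)).hasDerivWithinAt
  have := hdw.comp_hasDerivWithinAt t hline (fun s hs => ⟨hx, hs⟩)
  exact this.hasDerivAt (Icc_mem_nhds ht.1 ht.2)

/-- the within-first-derivative has the within-second-derivative as derivative at interior pts -/
lemma reg_D2 (hab : a < b) (hcd : c < d)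
    (h : ContDiffOn ℝ 2 F ((Icc a b) ×ˢ (Icc c d)))
    {p : ℝ × ℝ} (hp : p ∈ (Ioo a b) ×ˢ (Ioo c d)) :
    HasFDerivAt (fderivWithin ℝ F ((Icc a b) ×ˢ (Icc c d)))
      (fderivWithin ℝ (fderivWithin ℝ F ((Icc a b) ×ˢ (Icc c d)))
        ((Icc a b) ×ˢ (Icc c d)) p) p := by
  set s := (Icc a b) ×ˢ (Icc c d) with hs
  have hop : IsOpen ((Ioo a b) ×ˢ (Ioo c d)) := isOpen_Ioo.prod isOpen_Ioo
  have hsub : (Ioo a b) ×ˢ (Ioo c d) ⊆ s :=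
    Set.prod_mono Ioo_subset_Icc_self Ioo_subset_Icc_self
  have hnhds : s ∈ 𝓝 p := Filter.mem_of_superset (hop.mem_nhds hp) hsub
  have hev : fderivWithin ℝ F s =ᶠ[𝓝 p] fderiv ℝ F := by
    filter_upwards [hop.mem_nhds hp] with q hq
    exact fderivWithin_of_mem_nhds (Filter.mem_of_superset (hop.mem_nhds hq) hsub)
  have hca : ContDiffAt ℝ 2 F p := h.contDiffAt hnhds
  have hd : DifferentiableAt ℝ (fderiv ℝ F) p :=
    (hca.fderiv_right (m := 1) le_rfl).differentiableAt one_ne_zero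
  have h1 : HasFDerivAt (fderivWithin ℝ F s) (fderiv ℝ (fderiv ℝ F) p) p :=
    hd.hasFDerivAt.congr_of_eventuallyEq hev
  have h2 : fderivWithin ℝ (fderivWithin ℝ F s) s p = fderiv ℝ (fderiv ℝ F) p := by
    rw [fderivWithin_of_mem_nhds hnhds, hev.fderiv_eq]
  rw [h2]; exact h1

/-- symmetry of the second derivative at interior points -/
lemma reg_symm (hab : a < b) (hcd : c < d)
    (h : ContDiffOn ℝ 2 F ((Icc a b) ×ˢ (Icc c d)))
    {p : ℝ × ℝ} (hp : p ∈ (Ioo a b) ×ˢ (Ioo c d)) (v w : ℝ × ℝ) :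
    fderivWithin ℝ (fderivWithin ℝ F ((Icc a b) ×ˢ (Icc c d)))
        ((Icc a b) ×ˢ (Icc c d)) p v w
      = fderivWithin ℝ (fderivWithin ℝ F ((Icc a b) ×ˢ (Icc c d)))
        ((Icc a b) ×ˢ (Icc c d)) p w v := by
  set s := (Icc a b) ×ˢ (Icc c d) with hs
  have hop : IsOpen ((Ioo a b) ×ˢ (Ioo c d)) := isOpen_Ioo.prod isOpen_Ioo
  have hsub : (Ioo a b) ×ˢ (Ioo c d) ⊆ s :=
    Set.prod_mono Ioo_subset_Icc_self Ioo_subset_Icc_self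
  have hf : ∀ᶠ q in 𝓝 p, HasFDerivAt F (fderivWithin ℝ F s q) q := by
    filter_upwards [hop.mem_nhds hp] with q hq
    have hq' : s ∈ 𝓝 q := Filter.mem_of_superset (hop.mem_nhds hq) hsub
    have : DifferentiableAt ℝ F q := (h.contDiffAt hq').differentiableAt two_ne_zero
    rw [fderivWithin_of_mem_nhds hq']
    exact this.hasFDerivAt
  exact second_derivative_symmetric_of_eventually hf (reg_D2 hab hcd h hp) v w

/-- derivative in x of the partial derivative functions, at interior points -/
lemma reg_D1_x (hab : a < b) (hcd : c < d)
    (h : ContDiffOn ℝ 2 F ((Icc a b) ×ˢ (Icc c d)))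
    {x t : ℝ} (hx : x ∈ Ioo a b) (ht : t ∈ Ioo c d) (w : ℝ × ℝ) :
    HasDerivAt (fun y => fderivWithin ℝ F ((Icc a b) ×ˢ (Icc c d)) (y, t) w)
      (fderivWithin ℝ (fderivWithin ℝ F ((Icc a b) ×ˢ (Icc c d)))
        ((Icc a b) ×ˢ (Icc c d)) (x, t) (1, 0) w) x := by
  have hline : HasDerivAt (fun y : ℝ => (y, t)) ((1 : ℝ), (0 : ℝ)) x :=
    (hasDerivAt_id x).prodMk (hasDerivAt_const x t)
  have h1 := (reg_D2 hab hcd h (Set.mk_mem_prod hx ht)).comp_hasDerivAt x hline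
  exact ((ContinuousLinearMap.apply ℝ ℝ w).hasFDerivAt.comp_hasDerivAt x h1 :)

lemma reg_D1_t (hab : a < b) (hcd : c < d)
    (h : ContDiffOn ℝ 2 F ((Icc a b) ×ˢ (Icc c d)))
    {x t : ℝ} (hx : x ∈ Ioo a b) (ht : t ∈ Ioo c d) (w : ℝ × ℝ) :
    HasDerivAt (fun s => fderivWithin ℝ F ((Icc a b) ×ˢ (Icc c d)) (x, s) w)
      (fderivWithin ℝ (fderivWithin ℝ F ((Icc a b) ×ˢ (Icc c d)))
        ((Icc a b) ×ˢ (Icc c d)) (x, t) (0, 1) w) t := by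
  have hline : HasDerivAt (fun s : ℝ => (x, s)) ((0 : ℝ), (1 : ℝ)) t :=
    (hasDerivAt_const t x).prodMk (hasDerivAt_id t)
  have h1 := (reg_D2 hab hcd h (Set.mk_mem_prod hx ht)).comp_hasDerivAt t hline
  exact ((ContinuousLinearMap.apply ℝ ℝ w).hasFDerivAt.comp_hasDerivAt t h1 :)

end Reg


namespace NSaux

def F2 (f : ℝ → ℝ → ℝ) : ℝ × ℝ → ℝ := fun q => f q.1 q.2

noncomputable def DX (M T : ℝ) (f : ℝ → ℝ → ℝ) : ℝ × ℝ → ℝ :=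
  fun p => fderivWithin ℝ (F2 f) ((Icc (-M) M) ×ˢ (Icc 0 T)) p (1, 0)

noncomputable def DT (M T : ℝ) (f : ℝ → ℝ → ℝ) : ℝ × ℝ → ℝ :=
  fun p => fderivWithin ℝ (F2 f) ((Icc (-M) M) ×ˢ (Icc 0 T)) p (0, 1)

noncomputable def DXX (M T : ℝ) (f : ℝ → ℝ → ℝ) : ℝ × ℝ → ℝ :=
  fun p => fderivWithin ℝ (fderivWithin ℝ (F2 f) ((Icc (-M) M) ×ˢ (Icc 0 T)))
    ((Icc (-M) M) ×ˢ (Icc 0 T)) p (1, 0) (1, 0)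

/-- t-derivative of the x-derivative -/
noncomputable def DXT (M T : ℝ) (f : ℝ → ℝ → ℝ) : ℝ × ℝ → ℝ :=
  fun p => fderivWithin ℝ (fderivWithin ℝ (F2 f) ((Icc (-M) M) ×ˢ (Icc 0 T)))
    ((Icc (-M) M) ×ˢ (Icc 0 T)) p (0, 1) (1, 0)

/-- x-derivative of the t-derivative -/
noncomputable def DTX (M T : ℝ) (f : ℝ → ℝ → ℝ) : ℝ × ℝ → ℝ :=
  fun p => fderivWithin ℝ (fderivWithin ℝ (F2 f) ((Icc (-M) M) ×ˢ (Icc 0 T)))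
    ((Icc (-M) M) ×ˢ (Icc 0 T)) p (1, 0) (0, 1)

noncomputable def Fd (γ ρb r : ℝ) : ℝ :=
  (r ^ γ - ρb ^ γ - γ * ρb ^ (γ - 1) * (r - ρb)) / (γ - 1)

noncomputable def Wf (α M T : ℝ) (ρ u : ℝ → ℝ → ℝ) : ℝ × ℝ → ℝ :=
  fun p => u p.1 p.2 + ρ p.1 p.2 ^ (α - 2) * DX M T ρ p

noncomputable def EE (γ α ρb M T : ℝ) (ρ u : ℝ → ℝ → ℝ) : ℝ × ℝ → ℝ :=
  fun p => (α / 2) * ρ p.1 p.2 * (Wf α M T ρ u p) ^ 2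
    + (1 / 2) * ρ p.1 p.2 * u p.1 p.2 ^ 2 + (α + 1) * Fd γ ρb (ρ p.1 p.2)

noncomputable def HH (γ α ρb M T : ℝ) (ρ u : ℝ → ℝ → ℝ) : ℝ × ℝ → ℝ :=
  fun p => (α / 2) * ρ p.1 p.2 * (Wf α M T ρ u p) ^ 2
    + (1 / 2) * ρ p.1 p.2 * u p.1 p.2 ^ 2
    + (α + 1) * ((ρ p.1 p.2 ^ γ - ρb ^ γ) + Fd γ ρb (ρ p.1 p.2))
    - ρ p.1 p.2 ^ α * DX M T u p

noncomputable def GG (γ α ρb M T : ℝ) (ρ u : ℝ → ℝ → ℝ) : ℝ × ℝ → ℝ :=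
  fun p => u p.1 p.2 * HH γ α ρb M T ρ u p

noncomputable def WXf (α M T : ℝ) (ρ u : ℝ → ℝ → ℝ) : ℝ × ℝ → ℝ :=
  fun p => DX M T u p + ((α - 2) * ρ p.1 p.2 ^ (α - 3) * (DX M T ρ p) ^ 2
    + ρ p.1 p.2 ^ (α - 2) * DXX M T ρ p)

noncomputable def HX (γ α ρb M T : ℝ) (ρ u : ℝ → ℝ → ℝ) : ℝ × ℝ → ℝ :=
  fun p => (α / 2) * (DX M T ρ p * (Wf α M T ρ u p) ^ 2
      + ρ p.1 p.2 * (2 * Wf α M T ρ u p * WXf α M T ρ u p))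
    + (1 / 2) * (DX M T ρ p * u p.1 p.2 ^ 2
      + ρ p.1 p.2 * (2 * u p.1 p.2 * DX M T u p))
    + (α + 1) * (γ * ρ p.1 p.2 ^ (γ - 1) * DX M T ρ p
      + ((γ * ρ p.1 p.2 ^ (γ - 1) - γ * ρb ^ (γ - 1)) / (γ - 1)) * DX M T ρ p)
    - (α * ρ p.1 p.2 ^ (α - 1) * DX M T ρ p * DX M T u p
      + ρ p.1 p.2 ^ α * DXX M T u p)

noncomputable def GXf (γ α ρb M T : ℝ) (ρ u : ℝ → ℝ → ℝ) : ℝ × ℝ → ℝ :=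
  fun p => DX M T u p * HH γ α ρb M T ρ u p + u p.1 p.2 * HX γ α ρb M T ρ u p

noncomputable def DDf (γ α M T : ℝ) (ρ u : ℝ → ℝ → ℝ) : ℝ × ℝ → ℝ :=
  fun p => ρ p.1 p.2 ^ α * (DX M T u p) ^ 2
    + α * γ * ρ p.1 p.2 ^ (γ + α - 3) * (DX M T ρ p) ^ 2


variable {M T : ℝ} {f : ℝ → ℝ → ℝ}

lemma habM (hM : 0 < M) : -M < M := by linarith

lemma sliceX (hM : 0 < M) (hT : 0 < T)
    (hf : ContDiffOn ℝ 2 (F2 f) ((Icc (-M) M) ×ˢ (Icc 0 T)))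
    {x t : ℝ} (hx : x ∈ Ioo (-M) M) (ht : t ∈ Icc 0 T) :
    HasDerivAt (fun y => f y t) (DX M T f (x, t)) x :=
  reg_slice_x (habM hM) hT hf hx ht

lemma sliceT (hM : 0 < M) (hT : 0 < T)
    (hf : ContDiffOn ℝ 2 (F2 f) ((Icc (-M) M) ×ˢ (Icc 0 T)))
    {x t : ℝ} (hx : x ∈ Icc (-M) M) (ht : t ∈ Ioo 0 T) :
    HasDerivAt (fun s => f x s) (DT M T f (x, t)) t :=
  reg_slice_t (habM hM) hT hf hx ht

lemma pderivX_eq (hM : 0 < M) (hT : 0 < T)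
    (hf : ContDiffOn ℝ 2 (F2 f) ((Icc (-M) M) ×ˢ (Icc 0 T)))
    {x t : ℝ} (hx : x ∈ Ioo (-M) M) (ht : t ∈ Icc 0 T) :
    deriv (fun y => f y t) x = DX M T f (x, t) :=
  (sliceX hM hT hf hx ht).deriv

lemma pderivT_eq (hM : 0 < M) (hT : 0 < T)
    (hf : ContDiffOn ℝ 2 (F2 f) ((Icc (-M) M) ×ˢ (Icc 0 T)))
    {x t : ℝ} (hx : x ∈ Icc (-M) M) (ht : t ∈ Ioo 0 T) :
    deriv (fun s => f x s) t = DT M T f (x, t) :=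
  (sliceT hM hT hf hx ht).deriv

lemma DXsliceX (hM : 0 < M) (hT : 0 < T)
    (hf : ContDiffOn ℝ 2 (F2 f) ((Icc (-M) M) ×ˢ (Icc 0 T)))
    {x t : ℝ} (hx : x ∈ Ioo (-M) M) (ht : t ∈ Ioo 0 T) :
    HasDerivAt (fun y => DX M T f (y, t)) (DXX M T f (x, t)) x :=
  reg_D1_x (habM hM) hT hf hx ht (1, 0)

lemma DXsliceT (hM : 0 < M) (hT : 0 < T)
    (hf : ContDiffOn ℝ 2 (F2 f) ((Icc (-M) M) ×ˢ (Icc 0 T)))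
    {x t : ℝ} (hx : x ∈ Ioo (-M) M) (ht : t ∈ Ioo 0 T) :
    HasDerivAt (fun s => DX M T f (x, s)) (DXT M T f (x, t)) t :=
  reg_D1_t (habM hM) hT hf hx ht (1, 0)

lemma DTsliceX (hM : 0 < M) (hT : 0 < T)
    (hf : ContDiffOn ℝ 2 (F2 f) ((Icc (-M) M) ×ˢ (Icc 0 T)))
    {x t : ℝ} (hx : x ∈ Ioo (-M) M) (ht : t ∈ Ioo 0 T) :
    HasDerivAt (fun y => DT M T f (y, t)) (DTX M T f (x, t)) x :=
  reg_D1_x (habM hM) hT hf hx ht (0, 1)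

lemma clairaut (hM : 0 < M) (hT : 0 < T)
    (hf : ContDiffOn ℝ 2 (F2 f) ((Icc (-M) M) ×ˢ (Icc 0 T)))
    {x t : ℝ} (hx : x ∈ Ioo (-M) M) (ht : t ∈ Ioo 0 T) :
    DTX M T f (x, t) = DXT M T f (x, t) :=
  reg_symm (habM hM) hT hf (Set.mk_mem_prod hx ht) (1, 0) (0, 1)

lemma uds (hM : 0 < M) (hT : 0 < T) :
    UniqueDiffOn ℝ ((Icc (-M : ℝ) M) ×ˢ (Icc (0 : ℝ) T)) :=
  (uniqueDiffOn_Icc (habM hM)).prod (uniqueDiffOn_Icc hT)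

lemma cont_DX (hM : 0 < M) (hT : 0 < T)
    (hf : ContDiffOn ℝ 2 (F2 f) ((Icc (-M) M) ×ˢ (Icc 0 T))) :
    ContinuousOn (DX M T f) ((Icc (-M) M) ×ˢ (Icc 0 T)) :=
  ((hf.fderivWithin (uds hM hT) (m := 1) (by norm_num)).continuousOn).clm_apply continuousOn_const

lemma cont_DT (hM : 0 < M) (hT : 0 < T)
    (hf : ContDiffOn ℝ 2 (F2 f) ((Icc (-M) M) ×ˢ (Icc 0 T))) :
    ContinuousOn (DT M T f) ((Icc (-M) M) ×ˢ (Icc 0 T)) :=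
  ((hf.fderivWithin (uds hM hT) (m := 1) (by norm_num)).continuousOn).clm_apply continuousOn_const

lemma cont_DXX (hM : 0 < M) (hT : 0 < T)
    (hf : ContDiffOn ℝ 2 (F2 f) ((Icc (-M) M) ×ˢ (Icc 0 T))) :
    ContinuousOn (DXX M T f) ((Icc (-M) M) ×ˢ (Icc 0 T)) := by
  have h1 := hf.fderivWithin (uds hM hT) (m := 1) (by norm_num)
  have h2 := h1.fderivWithin (uds hM hT) (m := 0) (by norm_num)
  exact (h2.continuousOn.clm_apply continuousOn_const).clm_apply continuousOn_const

lemma cont_DXT (hM : 0 < M) (hT : 0 < T)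
    (hf : ContDiffOn ℝ 2 (F2 f) ((Icc (-M) M) ×ˢ (Icc 0 T))) :
    ContinuousOn (DXT M T f) ((Icc (-M) M) ×ˢ (Icc 0 T)) := by
  have h1 := hf.fderivWithin (uds hM hT) (m := 1) (by norm_num)
  have h2 := h1.fderivWithin (uds hM hT) (m := 0) (by norm_num)
  exact (h2.continuousOn.clm_apply continuousOn_const).clm_apply continuousOn_const



variable {γ α ρb M T : ℝ} {ρ u : ℝ → ℝ → ℝ}

lemma mass_int (hM : 0 < M) (hT : 0 < T)
    (hρ : ContDiffOn ℝ 2 (F2 ρ) ((Icc (-M) M) ×ˢ (Icc 0 T)))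
    (hu : ContDiffOn ℝ 2 (F2 u) ((Icc (-M) M) ×ˢ (Icc 0 T)))
    (hmass : ∀ x ∈ Icc (-M) M, ∀ t ∈ Icc 0 T,
      pderivT ρ x t + pderivX (fun y s => ρ y s * u y s) x t = 0)
    {x t : ℝ} (hx : x ∈ Ioo (-M) M) (ht : t ∈ Ioo 0 T) :
    DT M T ρ (x, t) + (DX M T ρ (x, t) * u x t + ρ x t * DX M T u (x, t)) = 0 := by
  have hx' : x ∈ Icc (-M) M := Ioo_subset_Icc_self hx
  have ht' : t ∈ Icc 0 T := Ioo_subset_Icc_self ht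
  have h := hmass x hx' t ht'
  have h1 : pderivT ρ x t = DT M T ρ (x, t) := pderivT_eq hM hT hρ hx' ht
  have h2 : pderivX (fun y s => ρ y s * u y s) x t
      = DX M T ρ (x, t) * u x t + ρ x t * DX M T u (x, t) :=
    ((sliceX hM hT hρ hx ht').mul (sliceX hM hT hu hx ht')).deriv
  rw [h1, h2] at h
  exact h

lemma massx_int (hM : 0 < M) (hT : 0 < T)
    (hρ : ContDiffOn ℝ 2 (F2 ρ) ((Icc (-M) M) ×ˢ (Icc 0 T)))
    (hu : ContDiffOn ℝ 2 (F2 u) ((Icc (-M) M) ×ˢ (Icc 0 T)))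
    (hmass : ∀ x ∈ Icc (-M) M, ∀ t ∈ Icc 0 T,
      pderivT ρ x t + pderivX (fun y s => ρ y s * u y s) x t = 0)
    {x t : ℝ} (hx : x ∈ Ioo (-M) M) (ht : t ∈ Ioo 0 T) :
    DXT M T ρ (x, t) + (DXX M T ρ (x, t) * u x t
      + 2 * DX M T ρ (x, t) * DX M T u (x, t) + ρ x t * DXX M T u (x, t)) = 0 := by
  have ht' : t ∈ Icc 0 T := Ioo_subset_Icc_self ht
  -- the function y ↦ DT ρ (y,t) + (DX ρ (y,t) * u y t + ρ y t * DX u (y,t)) vanishes on Ioo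
  have hev : (fun y => DT M T ρ (y, t) + (DX M T ρ (y, t) * u y t
      + ρ y t * DX M T u (y, t))) =ᶠ[𝓝 x] (fun _ => (0 : ℝ)) := by
    filter_upwards [Ioo_mem_nhds hx.1 hx.2] with y hy
    have h := hmass y (Ioo_subset_Icc_self hy) t ht'
    have h1 : pderivT ρ y t = DT M T ρ (y, t) :=
      pderivT_eq hM hT hρ (Ioo_subset_Icc_self hy) ht
    have h2 : pderivX (fun y s => ρ y s * u y s) y t
        = DX M T ρ (y, t) * u y t + ρ y t * DX M T u (y, t) :=
      ((sliceX hM hT hρ hy ht').mul (sliceX hM hT hu hy ht')).deriv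
    rw [h1, h2] at h
    exact h
  have hzero : HasDerivAt (fun y => DT M T ρ (y, t) + (DX M T ρ (y, t) * u y t
      + ρ y t * DX M T u (y, t))) 0 x :=
    (hasDerivAt_const x (0 : ℝ)).congr_of_eventuallyEq hev
  have hcomb : HasDerivAt (fun y => DT M T ρ (y, t) + (DX M T ρ (y, t) * u y t
      + ρ y t * DX M T u (y, t)))
      (DTX M T ρ (x, t) + ((DXX M T ρ (x, t) * u x t
        + DX M T ρ (x, t) * DX M T u (x, t))
        + (DX M T ρ (x, t) * DX M T u (x, t) + ρ x t * DXX M T u (x, t)))) x :=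
    (DTsliceX hM hT hρ hx ht).add
      (((DXsliceX hM hT hρ hx ht).mul (sliceX hM hT hu hx ht')).add
        ((sliceX hM hT hρ hx ht').mul (DXsliceX hM hT hu hx ht)))
  have := hcomb.unique hzero
  -- use Clairaut to convert DTX to DXT
  rw [clairaut hM hT hρ hx ht] at this
  linarith

lemma mom_int (hM : 0 < M) (hT : 0 < T) (hγ : 1 < γ) (hα : 0 < α)
    (hρ : ContDiffOn ℝ 2 (F2 ρ) ((Icc (-M) M) ×ˢ (Icc 0 T)))
    (hu : ContDiffOn ℝ 2 (F2 u) ((Icc (-M) M) ×ˢ (Icc 0 T)))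
    (hpos : ∀ x ∈ Icc (-M) M, ∀ t ∈ Icc 0 T, 0 < ρ x t)
    (hmom : ∀ x ∈ Icc (-M) M, ∀ t ∈ Icc 0 T,
      pderivT (fun y s => ρ y s * u y s) x t
        + pderivX (fun y s => ρ y s * u y s ^ 2 + ρ y s ^ γ) x t
        = pderivX (fun y s => ρ y s ^ α * pderivX u y s) x t)
    {x t : ℝ} (hx : x ∈ Ioo (-M) M) (ht : t ∈ Ioo 0 T) :
    DT M T ρ (x, t) * u x t + ρ x t * DT M T u (x, t)
      + (DX M T ρ (x, t) * u x t ^ 2 + 2 * ρ x t * u x t * DX M T u (x, t)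
        + γ * ρ x t ^ (γ - 1) * DX M T ρ (x, t))
      = α * ρ x t ^ (α - 1) * DX M T ρ (x, t) * DX M T u (x, t)
        + ρ x t ^ α * DXX M T u (x, t) := by
  have hx' : x ∈ Icc (-M) M := Ioo_subset_Icc_self hx
  have ht' : t ∈ Icc 0 T := Ioo_subset_Icc_self ht
  have hrpos : 0 < ρ x t := hpos x hx' t ht'
  have h := hmom x hx' t ht'
  have h1 : pderivT (fun y s => ρ y s * u y s) x t
      = DT M T ρ (x, t) * u x t + ρ x t * DT M T u (x, t) :=
    ((sliceT hM hT hρ hx' ht).mul (sliceT hM hT hu hx' ht)).deriv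
  have h2 : pderivX (fun y s => ρ y s * u y s ^ 2 + ρ y s ^ γ) x t
      = (DX M T ρ (x, t) * u x t ^ 2
        + ρ x t * (2 * u x t ^ 1 * DX M T u (x, t)))
        + DX M T ρ (x, t) * γ * ρ x t ^ (γ - 1) :=
    (((sliceX hM hT hρ hx ht').mul ((sliceX hM hT hu hx ht').pow 2)).add
      ((sliceX hM hT hρ hx ht').rpow_const (Or.inl hrpos.ne'))).deriv
  have h3 : pderivX (fun y s => ρ y s ^ α * pderivX u y s) x t
      = (DX M T ρ (x, t) * α * ρ x t ^ (α - 1)) * DX M T u (x, t)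
        + ρ x t ^ α * DXX M T u (x, t) := by
    have hev : (fun y => ρ y t ^ α * DX M T u (y, t))
        =ᶠ[𝓝 x] (fun y => ρ y t ^ α * pderivX u y t) := by
      filter_upwards [Ioo_mem_nhds hx.1 hx.2] with y hy
      rw [show pderivX u y t = DX M T u (y, t) from pderivX_eq hM hT hu hy ht']
    have hcomb : HasDerivAt (fun y => ρ y t ^ α * DX M T u (y, t))
        ((DX M T ρ (x, t) * α * ρ x t ^ (α - 1)) * DX M T u (x, t)
          + ρ x t ^ α * DXX M T u (x, t)) x :=
      ((sliceX hM hT hρ hx ht').rpow_const (Or.inl hrpos.ne')).mul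
        (DXsliceX hM hT hu hx ht)
    exact (hcomb.congr_of_eventuallyEq hev.symm).deriv
  rw [h1, h2, h3] at h
  linear_combination h



variable {γ α ρb M T : ℝ} {ρ u : ℝ → ℝ → ℝ}

lemma deriv_G (hM : 0 < M) (hT : 0 < T)
    (hρ : ContDiffOn ℝ 2 (F2 ρ) ((Icc (-M) M) ×ˢ (Icc 0 T)))
    (hu : ContDiffOn ℝ 2 (F2 u) ((Icc (-M) M) ×ˢ (Icc 0 T)))
    (hpos : ∀ x ∈ Icc (-M) M, ∀ t ∈ Icc 0 T, 0 < ρ x t)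
    {x t : ℝ} (hx : x ∈ Ioo (-M) M) (ht : t ∈ Ioo 0 T) :
    HasDerivAt (fun y => GG γ α ρb M T ρ u (y, t)) (GXf γ α ρb M T ρ u (x, t)) x := by
  have hx' : x ∈ Icc (-M) M := Ioo_subset_Icc_self hx
  have ht' : t ∈ Icc 0 T := Ioo_subset_Icc_self ht
  have hr : ρ x t ≠ 0 := (hpos x hx' t ht').ne'
  have hρy := sliceX hM hT hρ hx ht'
  have huy := sliceX hM hT hu hx ht'
  have hRXy := DXsliceX hM hT hρ hx ht
  have hVXy := DXsliceX hM hT hu hx ht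
  have hW := huy.add (((hρy.rpow_const (p := α - 2)) (Or.inl hr)).mul hRXy)
  have h1 := (hρy.const_mul (α / 2)).mul (hW.pow 2)
  have h2 := (hρy.const_mul (1 / 2)).mul (huy.pow 2)
  have hFd := (((hρy.rpow_const (p := γ) (Or.inl hr)).sub_const (ρb ^ γ)).sub
    ((hρy.sub_const ρb).const_mul (γ * ρb ^ (γ - 1)))).div_const (γ - 1)
  have h3 := (((hρy.rpow_const (p := γ) (Or.inl hr)).sub_const (ρb ^ γ)).add hFd).const_mul (α + 1)
  have h4 := (hρy.rpow_const (p := α) (Or.inl hr)).mul hVXy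
  have hG := huy.mul (((h1.add h2).add h3).sub h4)
  refine hG.congr_deriv ?_
  simp only [Pi.add_apply, Pi.mul_apply, Pi.pow_apply, Pi.sub_apply]
  unfold GXf HX HH WXf Wf Fd
  push_cast
  rw [show α - 2 - 1 = α - 3 by ring]
  ring



variable {γ α ρb M T : ℝ} {ρ u : ℝ → ℝ → ℝ}

lemma deriv_E (hM : 0 < M) (hT : 0 < T) (hγ : 1 < γ) (hα : 0 < α) (hρb : 0 ≤ ρb)
    (hρ : ContDiffOn ℝ 2 (F2 ρ) ((Icc (-M) M) ×ˢ (Icc 0 T)))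
    (hu : ContDiffOn ℝ 2 (F2 u) ((Icc (-M) M) ×ˢ (Icc 0 T)))
    (hpos : ∀ x ∈ Icc (-M) M, ∀ t ∈ Icc 0 T, 0 < ρ x t)
    (hmass : ∀ x ∈ Icc (-M) M, ∀ t ∈ Icc 0 T,
      pderivT ρ x t + pderivX (fun y s => ρ y s * u y s) x t = 0)
    (hmom : ∀ x ∈ Icc (-M) M, ∀ t ∈ Icc 0 T,
      pderivT (fun y s => ρ y s * u y s) x t
        + pderivX (fun y s => ρ y s * u y s ^ 2 + ρ y s ^ γ) x t
        = pderivX (fun y s => ρ y s ^ α * pderivX u y s) x t)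
    {x t : ℝ} (hx : x ∈ Ioo (-M) M) (ht : t ∈ Ioo 0 T) :
    HasDerivAt (fun s => EE γ α ρb M T ρ u (x, s))
      (-(GXf γ α ρb M T ρ u (x, t)) - DDf γ α M T ρ u (x, t)) t := by
  have hx' : x ∈ Icc (-M) M := Ioo_subset_Icc_self hx
  have ht' : t ∈ Icc 0 T := Ioo_subset_Icc_self ht
  have hrpos : 0 < ρ x t := hpos x hx' t ht'
  have hr : ρ x t ≠ 0 := hrpos.ne'
  have hg1 : γ - 1 ≠ 0 := by linarith
  -- combinator derivative of E in time
  have hρt := sliceT hM hT hρ hx' ht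
  have hut := sliceT hM hT hu hx' ht
  have hRXt := DXsliceT hM hT hρ hx ht
  have hW := hut.add ((hρt.rpow_const (p := α - 2) (Or.inl hr)).mul hRXt)
  have h1 := (hρt.const_mul (α / 2)).mul (hW.pow 2)
  have h2 := (hρt.const_mul (1 / 2)).mul (hut.pow 2)
  have hFd := (((hρt.rpow_const (p := γ) (Or.inl hr)).sub_const (ρb ^ γ)).sub
    ((hρt.sub_const ρb).const_mul (γ * ρb ^ (γ - 1)))).div_const (γ - 1)
  have h3 := hFd.const_mul (α + 1)
  have hE := (h1.add h2).add h3
  refine hE.congr_deriv ?_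
  simp only [Pi.add_apply, Pi.mul_apply, Pi.pow_apply, Pi.sub_apply]
  -- now the equality of the derivative values, using the PDE
  have hm1 := mass_int hM hT hρ hu hmass hx ht
  have hm3 := massx_int hM hT hρ hu hmass hx ht
  have hDTρ : DT M T ρ (x, t)
      = -(DX M T ρ (x, t) * u x t + ρ x t * DX M T u (x, t)) := by linarith
  have hDXTρ : DXT M T ρ (x, t) = -(DXX M T ρ (x, t) * u x t
      + 2 * DX M T ρ (x, t) * DX M T u (x, t) + ρ x t * DXX M T u (x, t)) := by
    linarith
  have hm2 := mom_int hM hT hγ hα hρ hu hpos hmom hx ht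
  rw [hDTρ] at hm2
  have hDTu : DT M T u (x, t)
      = (α * ρ x t ^ (α - 1) * DX M T ρ (x, t) * DX M T u (x, t)
        + ρ x t ^ α * DXX M T u (x, t)
        + (DX M T ρ (x, t) * u x t + ρ x t * DX M T u (x, t)) * u x t
        - DX M T ρ (x, t) * u x t ^ 2 - 2 * ρ x t * u x t * DX M T u (x, t)
        - γ * ρ x t ^ (γ - 1) * DX M T ρ (x, t)) / ρ x t := by
    field_simp
    linarith
  -- power rewrites
  have hp1 : ρ x t ^ (α - 2) = ρ x t ^ (α - 3) * ρ x t := by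
    conv_lhs => rw [show α - 2 = α - 3 + 1 by ring]
    rw [Real.rpow_add_one hr]
  have hp2 : ρ x t ^ (α - 1) = ρ x t ^ (α - 3) * ρ x t * ρ x t := by
    conv_lhs => rw [show α - 1 = α - 3 + 1 + 1 by ring]
    rw [Real.rpow_add_one hr, Real.rpow_add_one hr]
  have hp3 : ρ x t ^ α = ρ x t ^ (α - 3) * ρ x t * ρ x t * ρ x t := by
    conv_lhs => rw [show α = α - 3 + 1 + 1 + 1 by ring]
    rw [Real.rpow_add_one hr, Real.rpow_add_one hr, Real.rpow_add_one hr]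
  have hp4 : ρ x t ^ γ = ρ x t ^ (γ - 1) * ρ x t := by
    conv_lhs => rw [show γ = γ - 1 + 1 by ring]
    rw [Real.rpow_add_one hr]
  have hp5 : ρ x t ^ (γ + α - 3)
      = ρ x t ^ (γ - 1) * ρ x t ^ (α - 3) * ρ x t := by
    conv_lhs => rw [show γ + α - 3 = γ - 1 + (α - 3) + 1 by ring]
    rw [Real.rpow_add_one hr, Real.rpow_add hrpos]
  have hp6 : ρb ^ γ = ρb ^ (γ - 1) * ρb := by
    rcases eq_or_lt_of_le hρb with h0 | h0
    · rw [← h0, Real.zero_rpow (by linarith), Real.zero_rpow (by linarith)]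
      ring
    · conv_lhs => rw [show γ = γ - 1 + 1 by ring]
      rw [Real.rpow_add_one h0.ne']
  unfold GXf HX HH WXf Wf DDf Fd
  push_cast
  rw [show α - 2 - 1 = α - 3 by ring]
  rw [hDTρ, hDXTρ, hDTu, hp1, hp2, hp3, hp4, hp5, hp6]
  field_simp
  ring



variable {γ α ρb M T : ℝ} {ρ u : ℝ → ℝ → ℝ}

lemma cont_rho (hρ : ContDiffOn ℝ 2 (F2 ρ) ((Icc (-M) M) ×ˢ (Icc 0 T))) :
    ContinuousOn (fun p : ℝ × ℝ => ρ p.1 p.2) ((Icc (-M) M) ×ˢ (Icc 0 T)) :=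
  hρ.continuousOn

lemma cont_rpow (hρ : ContDiffOn ℝ 2 (F2 ρ) ((Icc (-M) M) ×ˢ (Icc 0 T)))
    (hpos : ∀ x ∈ Icc (-M) M, ∀ t ∈ Icc 0 T, 0 < ρ x t) (e : ℝ) :
    ContinuousOn (fun p : ℝ × ℝ => ρ p.1 p.2 ^ e) ((Icc (-M) M) ×ˢ (Icc 0 T)) :=
  (cont_rho hρ).rpow_const (fun p hp => Or.inl (hpos p.1 hp.1 p.2 hp.2).ne')

lemma cont_EE (hM : 0 < M) (hT : 0 < T)
    (hρ : ContDiffOn ℝ 2 (F2 ρ) ((Icc (-M) M) ×ˢ (Icc 0 T)))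
    (hu : ContDiffOn ℝ 2 (F2 u) ((Icc (-M) M) ×ˢ (Icc 0 T)))
    (hpos : ∀ x ∈ Icc (-M) M, ∀ t ∈ Icc 0 T, 0 < ρ x t) :
    ContinuousOn (EE γ α ρb M T ρ u) ((Icc (-M) M) ×ˢ (Icc 0 T)) := by
  have hcρ := cont_rho hρ
  have hcu : ContinuousOn (fun p : ℝ × ℝ => u p.1 p.2) _ := hu.continuousOn
  have hW : ContinuousOn (Wf α M T ρ u) ((Icc (-M) M) ×ˢ (Icc 0 T)) :=
    hcu.add ((cont_rpow hρ hpos (α - 2)).mul (cont_DX hM hT hρ))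
  exact ((continuousOn_const.mul hcρ).mul (hW.pow 2)).add
    ((continuousOn_const.mul hcρ).mul (hcu.pow 2)) |>.add
    (continuousOn_const.mul ((((cont_rpow hρ hpos γ).sub continuousOn_const).sub
      (continuousOn_const.mul (hcρ.sub continuousOn_const))).div_const (γ - 1)))

lemma cont_HH (hM : 0 < M) (hT : 0 < T)
    (hρ : ContDiffOn ℝ 2 (F2 ρ) ((Icc (-M) M) ×ˢ (Icc 0 T)))
    (hu : ContDiffOn ℝ 2 (F2 u) ((Icc (-M) M) ×ˢ (Icc 0 T)))
    (hpos : ∀ x ∈ Icc (-M) M, ∀ t ∈ Icc 0 T, 0 < ρ x t) :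
    ContinuousOn (HH γ α ρb M T ρ u) ((Icc (-M) M) ×ˢ (Icc 0 T)) := by
  have hcρ := cont_rho hρ
  have hcu : ContinuousOn (fun p : ℝ × ℝ => u p.1 p.2) _ := hu.continuousOn
  have hW : ContinuousOn (Wf α M T ρ u) ((Icc (-M) M) ×ˢ (Icc 0 T)) :=
    hcu.add ((cont_rpow hρ hpos (α - 2)).mul (cont_DX hM hT hρ))
  exact (((continuousOn_const.mul hcρ).mul (hW.pow 2)).add
    ((continuousOn_const.mul hcρ).mul (hcu.pow 2)) |>.add
    (continuousOn_const.mul (((cont_rpow hρ hpos γ).sub continuousOn_const).add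
      ((((cont_rpow hρ hpos γ).sub continuousOn_const).sub
        (continuousOn_const.mul (hcρ.sub continuousOn_const))).div_const (γ - 1))))).sub
    ((cont_rpow hρ hpos α).mul (cont_DX hM hT hu))

lemma cont_GG (hM : 0 < M) (hT : 0 < T)
    (hρ : ContDiffOn ℝ 2 (F2 ρ) ((Icc (-M) M) ×ˢ (Icc 0 T)))
    (hu : ContDiffOn ℝ 2 (F2 u) ((Icc (-M) M) ×ˢ (Icc 0 T)))
    (hpos : ∀ x ∈ Icc (-M) M, ∀ t ∈ Icc 0 T, 0 < ρ x t) :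
    ContinuousOn (GG γ α ρb M T ρ u) ((Icc (-M) M) ×ˢ (Icc 0 T)) :=
  (hu.continuousOn :).mul (cont_HH hM hT hρ hu hpos)

lemma cont_GXf (hM : 0 < M) (hT : 0 < T)
    (hρ : ContDiffOn ℝ 2 (F2 ρ) ((Icc (-M) M) ×ˢ (Icc 0 T)))
    (hu : ContDiffOn ℝ 2 (F2 u) ((Icc (-M) M) ×ˢ (Icc 0 T)))
    (hpos : ∀ x ∈ Icc (-M) M, ∀ t ∈ Icc 0 T, 0 < ρ x t) :
    ContinuousOn (GXf γ α ρb M T ρ u) ((Icc (-M) M) ×ˢ (Icc 0 T)) := by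
  have hcρ := cont_rho hρ
  have hcu : ContinuousOn (fun p : ℝ × ℝ => u p.1 p.2) _ := hu.continuousOn
  have hW : ContinuousOn (Wf α M T ρ u) ((Icc (-M) M) ×ˢ (Icc 0 T)) :=
    hcu.add ((cont_rpow hρ hpos (α - 2)).mul (cont_DX hM hT hρ))
  have hWX : ContinuousOn (WXf α M T ρ u) ((Icc (-M) M) ×ˢ (Icc 0 T)) :=
    (cont_DX hM hT hu).add (((continuousOn_const.mul
      (cont_rpow hρ hpos (α - 3))).mul ((cont_DX hM hT hρ).pow 2)).add
      ((cont_rpow hρ hpos (α - 2)).mul (cont_DXX hM hT hρ)))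
  have hHX : ContinuousOn (HX γ α ρb M T ρ u) ((Icc (-M) M) ×ˢ (Icc 0 T)) := by
    exact (((continuousOn_const.mul (((cont_DX hM hT hρ).mul (hW.pow 2)).add
        (hcρ.mul ((continuousOn_const.mul hW).mul hWX)))).add
      (continuousOn_const.mul (((cont_DX hM hT hρ).mul (hcu.pow 2)).add
        (hcρ.mul ((continuousOn_const.mul hcu).mul (cont_DX hM hT hu)))))).add
      (continuousOn_const.mul (((continuousOn_const.mul
          (cont_rpow hρ hpos (γ - 1))).mul (cont_DX hM hT hρ)).add
        ((((continuousOn_const.mul (cont_rpow hρ hpos (γ - 1))).sub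
          continuousOn_const).div_const (γ - 1)).mul (cont_DX hM hT hρ))))).sub
      ((((continuousOn_const.mul (cont_rpow hρ hpos (α - 1))).mul
        (cont_DX hM hT hρ)).mul (cont_DX hM hT hu)).add
        ((cont_rpow hρ hpos α).mul (cont_DXX hM hT hu)))
  exact ((cont_DX hM hT hu).mul (cont_HH hM hT hρ hu hpos)).add (hcu.mul hHX)

lemma cont_DDf (hM : 0 < M) (hT : 0 < T)
    (hρ : ContDiffOn ℝ 2 (F2 ρ) ((Icc (-M) M) ×ˢ (Icc 0 T)))
    (hu : ContDiffOn ℝ 2 (F2 u) ((Icc (-M) M) ×ˢ (Icc 0 T)))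
    (hpos : ∀ x ∈ Icc (-M) M, ∀ t ∈ Icc 0 T, 0 < ρ x t) :
    ContinuousOn (DDf γ α M T ρ u) ((Icc (-M) M) ×ˢ (Icc 0 T)) :=
  ((cont_rpow hρ hpos α).mul ((cont_DX hM hT hu).pow 2)).add
    ((continuousOn_const.mul (cont_rpow hρ hpos (γ + α - 3))).mul
      ((cont_DX hM hT hρ).pow 2))



variable {M T t : ℝ} {ψ : ℝ × ℝ → ℝ}

lemma fubini_step (hM : 0 < M) (h0 : 0 < t) (htT : t ≤ T)
    (hψ : ContinuousOn ψ ((Icc (-M) M) ×ˢ (Icc 0 T))) :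
    ∫ x in (-M)..M, (∫ s in (0:ℝ)..t, ψ (x, s))
      = ∫ s in (0:ℝ)..t, ∫ x in (-M)..M, ψ (x, s) := by
  have hab : -M ≤ M := by linarith
  have hint : IntegrableOn ψ ((Icc (-M) M) ×ˢ (Icc 0 t)) :=
    (hψ.mono (prod_mono subset_rfl (Icc_subset_Icc le_rfl htT))).integrableOn_compact
      (isCompact_Icc.prod isCompact_Icc)
  have hint2 : Integrable (Function.uncurry fun x s => ψ (x, s))
      ((volume.restrict (Ioc (-M) M)).prod (volume.restrict (Ioc 0 t))) := by
    rw [Measure.prod_restrict]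
    have h3 : IntegrableOn ψ ((Ioc (-M) M) ×ˢ (Ioc 0 t)) :=
      hint.mono_set (prod_mono Ioc_subset_Icc_self Ioc_subset_Icc_self)
    have : (Function.uncurry fun x s => ψ (x, s)) = ψ := by
      funext p; simp [Function.uncurry]
    rw [this]
    exact h3
  simp_rw [intervalIntegral.integral_of_le hab, intervalIntegral.integral_of_le h0.le]
  exact MeasureTheory.integral_integral_swap hint2

lemma ae_ne_real (c : ℝ) : ∀ᵐ (x : ℝ) ∂volume, x ≠ c := by
  have h : volume ({c} : Set ℝ) = 0 := Real.volume_singleton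
  exact compl_mem_ae_iff.mpr h


end NSaux

/-- The combined energy–Bresch–Desjardins entropy estimate (Lemma 3.1) in
identity form, for smooth positive solutions of the one-dimensional compressible
isentropic Navier–Stokes equations on `[−M, M] × [0, T]` with zero velocity
boundary conditions. -/
theorem stmt0 (γ α ρb M T : ℝ) (hγ : 1 < γ) (hα : 0 < α) (hρb : 0 ≤ ρb)
    (hM : 0 < M) (hT : 0 < T) (ρ u : ℝ → ℝ → ℝ)
    (hρ : ContDiffOn ℝ 2 (fun p : ℝ × ℝ => ρ p.1 p.2)
      (Set.Icc (-M) M ×ˢ Set.Icc 0 T))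
    (hu : ContDiffOn ℝ 2 (fun p : ℝ × ℝ => u p.1 p.2)
      (Set.Icc (-M) M ×ˢ Set.Icc 0 T))
    (hpos : ∀ x ∈ Set.Icc (-M) M, ∀ t ∈ Set.Icc 0 T, 0 < ρ x t)
    (hmass : ∀ x ∈ Set.Icc (-M) M, ∀ t ∈ Set.Icc 0 T,
      pderivT ρ x t + pderivX (fun y s => ρ y s * u y s) x t = 0)
    (hmom : ∀ x ∈ Set.Icc (-M) M, ∀ t ∈ Set.Icc 0 T,
      pderivT (fun y s => ρ y s * u y s) x t
        + pderivX (fun y s => ρ y s * u y s ^ 2 + ρ y s ^ γ) x t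
        = pderivX (fun y s => ρ y s ^ α * pderivX u y s) x t)
    (hbc : ∀ t ∈ Set.Icc 0 T, u (-M) t = 0 ∧ u M t = 0) :
    ∀ t ∈ Set.Icc 0 T,
      (∫ x in (-M)..M,
        ((α / 2) * ρ x t * (u x t + ρ x t ^ (α - 2) * pderivX ρ x t) ^ 2
          + (1 / 2) * ρ x t * u x t ^ 2
          + (α + 1) * ρ x t * psi γ (ρ x t) ρb))
      + (∫ s in (0:ℝ)..t, ∫ x in (-M)..M,
          (ρ x s ^ α * (pderivX u x s) ^ 2
            + α * γ * ρ x s ^ (γ + α - 3) * (pderivX ρ x s) ^ 2))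
      = ∫ x in (-M)..M,
          ((α / 2) * ρ x 0 * (u x 0 + ρ x 0 ^ (α - 2) * pderivX ρ x 0) ^ 2
            + (1 / 2) * ρ x 0 * u x 0 ^ 2
            + (α + 1) * ρ x 0 * psi γ (ρ x 0) ρb) := by
  have hab : -M ≤ M := by linarith
  have hg1 : γ - 1 ≠ 0 := by linarith
  have hρ' : ContDiffOn ℝ 2 (NSaux.F2 ρ) ((Icc (-M) M) ×ˢ (Icc 0 T)) := hρ
  have hu' : ContDiffOn ℝ 2 (NSaux.F2 u) ((Icc (-M) M) ×ˢ (Icc 0 T)) := hu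
  intro t ht
  -- rewrite the spatial integrals in terms of EE
  have hIE : ∀ τ, τ ∈ Icc (0:ℝ) T →
      (∫ x in (-M)..M,
        ((α / 2) * ρ x τ * (u x τ + ρ x τ ^ (α - 2) * pderivX ρ x τ) ^ 2
          + (1 / 2) * ρ x τ * u x τ ^ 2
          + (α + 1) * ρ x τ * psi γ (ρ x τ) ρb))
      = ∫ x in (-M)..M, NSaux.EE γ α ρb M T ρ u (x, τ) := by
    intro τ hτ
    apply intervalIntegral.integral_congr_ae
    filter_upwards [NSaux.ae_ne_real M] with x hxM hxmem
    rw [uIoc_of_le hab] at hxmem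
    have hx : x ∈ Ioo (-M) M := ⟨hxmem.1, lt_of_le_of_ne hxmem.2 hxM⟩
    have hρpos := hpos x (Ioo_subset_Icc_self hx) τ hτ
    simp only [pderivX]
    rw [NSaux.pderivX_eq hM hT hρ' hx hτ]
    unfold NSaux.EE NSaux.Wf NSaux.Fd psi
    field_simp
  -- rewrite the dissipation integrand in terms of DDf
  have hID : (∫ s in (0:ℝ)..t, ∫ x in (-M)..M,
        (ρ x s ^ α * (pderivX u x s) ^ 2
          + α * γ * ρ x s ^ (γ + α - 3) * (pderivX ρ x s) ^ 2))
      = ∫ s in (0:ℝ)..t, ∫ x in (-M)..M, NSaux.DDf γ α M T ρ u (x, s) := by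
    apply intervalIntegral.integral_congr
    intro s hs
    rw [uIcc_of_le ht.1] at hs
    have hs' : s ∈ Icc (0:ℝ) T := ⟨hs.1, le_trans hs.2 ht.2⟩
    apply intervalIntegral.integral_congr_ae
    filter_upwards [NSaux.ae_ne_real M] with x hxM hxmem
    rw [uIoc_of_le hab] at hxmem
    have hx : x ∈ Ioo (-M) M := ⟨hxmem.1, lt_of_le_of_ne hxmem.2 hxM⟩
    simp only [pderivX]
    rw [NSaux.pderivX_eq hM hT hρ' hx hs', NSaux.pderivX_eq hM hT hu' hx hs']
    rfl
  rw [hIE t ht, hIE 0 ⟨le_refl 0, hT.le⟩, hID]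
  rcases eq_or_lt_of_le ht.1 with h0 | h0
  · rw [← h0]; simp
  have htT : t ≤ T := ht.2
  -- continuity packages
  have hcE := NSaux.cont_EE (γ := γ) (α := α) (ρb := ρb) hM hT hρ' hu' hpos
  have hcG := NSaux.cont_GG (γ := γ) (α := α) (ρb := ρb) hM hT hρ' hu' hpos
  have hcGX := NSaux.cont_GXf (γ := γ) (α := α) (ρb := ρb) hM hT hρ' hu' hpos
  have hcDD := NSaux.cont_DDf (γ := γ) (α := α) hM hT hρ' hu' hpos
  -- slices
  have hsliceX : ∀ (f : ℝ × ℝ → ℝ), ContinuousOn f ((Icc (-M) M) ×ˢ (Icc 0 T)) →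
      ∀ τ, τ ∈ Icc (0:ℝ) T → ContinuousOn (fun x => f (x, τ)) (Icc (-M) M) := by
    intro f hf τ hτ
    exact hf.comp (continuous_id.prodMk continuous_const).continuousOn
      (fun x hx => ⟨hx, hτ⟩)
  have hsliceT : ∀ (f : ℝ × ℝ → ℝ), ContinuousOn f ((Icc (-M) M) ×ˢ (Icc 0 T)) →
      ∀ x, x ∈ Icc (-M) M → ContinuousOn (fun s => f (x, s)) (Icc 0 T) := by
    intro f hf x hx
    exact hf.comp (continuous_const.prodMk continuous_id).continuousOn
      (fun s hs => ⟨hx, hs⟩)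
  -- FTC in time, for x in the open interval
  have hFTCt : ∀ x ∈ Ioo (-M) M,
      ∫ s in (0:ℝ)..t, (-(NSaux.GXf γ α ρb M T ρ u (x, s))
          - NSaux.DDf γ α M T ρ u (x, s))
        = NSaux.EE γ α ρb M T ρ u (x, t) - NSaux.EE γ α ρb M T ρ u (x, 0) := by
    intro x hx
    have hx' : x ∈ Icc (-M) M := Ioo_subset_Icc_self hx
    apply intervalIntegral.integral_eq_sub_of_hasDeriv_right_of_le h0.le
    · exact ((hsliceT _ hcE x hx').mono (Icc_subset_Icc le_rfl htT))
    · intro s hs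
      exact (NSaux.deriv_E hM hT hγ hα hρb hρ' hu' hpos hmass hmom hx
        ⟨hs.1, lt_of_lt_of_le hs.2 htT⟩).hasDerivWithinAt
    · apply ContinuousOn.intervalIntegrable
      rw [uIcc_of_le h0.le]
      exact (((hsliceT _ hcGX x hx').mono (Icc_subset_Icc le_rfl htT)).neg).sub
        ((hsliceT _ hcDD x hx').mono (Icc_subset_Icc le_rfl htT))
  -- interval integrability of EE slices in x
  have hIntE : ∀ τ, τ ∈ Icc (0:ℝ) T →
      IntervalIntegrable (fun x => NSaux.EE γ α ρb M T ρ u (x, τ)) volume (-M) M := by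
    intro τ hτ
    apply ContinuousOn.intervalIntegrable
    rw [uIcc_of_le hab]
    exact hsliceX _ hcE τ hτ
  -- the key balance identity
  have key : (∫ x in (-M)..M, NSaux.EE γ α ρb M T ρ u (x, t))
      - (∫ x in (-M)..M, NSaux.EE γ α ρb M T ρ u (x, 0))
      = - ∫ s in (0:ℝ)..t, ∫ x in (-M)..M, NSaux.DDf γ α M T ρ u (x, s) := by
    have e1 : (∫ x in (-M)..M, NSaux.EE γ α ρb M T ρ u (x, t))
        - (∫ x in (-M)..M, NSaux.EE γ α ρb M T ρ u (x, 0))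
        = ∫ x in (-M)..M, (NSaux.EE γ α ρb M T ρ u (x, t)
            - NSaux.EE γ α ρb M T ρ u (x, 0)) :=
      (intervalIntegral.integral_sub (hIntE t ht) (hIntE 0 ⟨le_refl 0, hT.le⟩)).symm
    have e2 : ∫ x in (-M)..M, (NSaux.EE γ α ρb M T ρ u (x, t)
          - NSaux.EE γ α ρb M T ρ u (x, 0))
        = ∫ x in (-M)..M, (∫ s in (0:ℝ)..t,
            (-(NSaux.GXf γ α ρb M T ρ u (x, s)) - NSaux.DDf γ α M T ρ u (x, s))) := by
      apply intervalIntegral.integral_congr_ae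
      filter_upwards [NSaux.ae_ne_real M] with x hxM hxmem
      rw [uIoc_of_le hab] at hxmem
      have hx : x ∈ Ioo (-M) M := ⟨hxmem.1, lt_of_le_of_ne hxmem.2 hxM⟩
      exact (hFTCt x hx).symm
    have e3 : ∫ x in (-M)..M, (∫ s in (0:ℝ)..t,
          (-(NSaux.GXf γ α ρb M T ρ u (x, s)) - NSaux.DDf γ α M T ρ u (x, s)))
        = ∫ s in (0:ℝ)..t, ∫ x in (-M)..M,
            (-(NSaux.GXf γ α ρb M T ρ u (x, s)) - NSaux.DDf γ α M T ρ u (x, s)) :=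
      NSaux.fubini_step hM h0 htT (hcGX.neg.sub hcDD)
    have e4 : ∫ s in (0:ℝ)..t, ∫ x in (-M)..M,
          (-(NSaux.GXf γ α ρb M T ρ u (x, s)) - NSaux.DDf γ α M T ρ u (x, s))
        = ∫ s in (0:ℝ)..t, (- ∫ x in (-M)..M, NSaux.DDf γ α M T ρ u (x, s)) := by
      apply intervalIntegral.integral_congr_ae
      filter_upwards [NSaux.ae_ne_real T] with s hsT hsmem
      rw [uIoc_of_le h0.le] at hsmem
      have hs : s ∈ Ioo (0:ℝ) T :=
        ⟨hsmem.1, lt_of_le_of_ne (le_trans hsmem.2 htT) hsT⟩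
      have hs' : s ∈ Icc (0:ℝ) T := Ioo_subset_Icc_self hs
      have hiGX : IntervalIntegrable
          (fun x => NSaux.GXf γ α ρb M T ρ u (x, s)) volume (-M) M := by
        apply ContinuousOn.intervalIntegrable
        rw [uIcc_of_le hab]
        exact hsliceX _ hcGX s hs'
      have hiDD : IntervalIntegrable
          (fun x => NSaux.DDf γ α M T ρ u (x, s)) volume (-M) M := by
        apply ContinuousOn.intervalIntegrable
        rw [uIcc_of_le hab]
        exact hsliceX _ hcDD s hs'
      have hGX0 : ∫ x in (-M)..M, NSaux.GXf γ α ρb M T ρ u (x, s)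
          = NSaux.GG γ α ρb M T ρ u (M, s) - NSaux.GG γ α ρb M T ρ u (-M, s) := by
        apply intervalIntegral.integral_eq_sub_of_hasDeriv_right_of_le
          (f := fun y => NSaux.GG γ α ρb M T ρ u (y, s)) hab
        · exact hsliceX _ hcG s hs'
        · intro x hx
          exact (NSaux.deriv_G hM hT hρ' hu' hpos hx hs).hasDerivWithinAt
        · exact hiGX
      have hGb : NSaux.GG γ α ρb M T ρ u (M, s) = 0 := by
        unfold NSaux.GG
        rw [(hbc s hs').2]
        ring
      have hGb' : NSaux.GG γ α ρb M T ρ u (-M, s) = 0 := by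
        unfold NSaux.GG
        rw [(hbc s hs').1]
        ring
      have hiGXneg : IntervalIntegrable
          (fun x => -(NSaux.GXf γ α ρb M T ρ u (x, s))) volume (-M) M := hiGX.neg
      rw [intervalIntegral.integral_sub hiGXneg hiDD,
        intervalIntegral.integral_neg, hGX0, hGb, hGb']
      ring
    rw [e1, e2, e3, e4, intervalIntegral.integral_neg]
  linarith [key]

end NSProofAux
end

section
/- Let α > 0 and let U ⊆ ℝ × ℝ be open. Suppose ρ, u : U → ℝ are twice continuously differentiable, ρ > 0 on U, and the continuity equation ρ_t + (ρu)_x = 0 holds pointwise on U. Then at every point of U, ∂_x( ρ^α·u_x ) = −ρ·∂_t( ρ^{α−2}·ρ_x ) − ρ·u·∂_x( ρ^{α−2}·ρ_x ). -/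
open Real Topology Filter

lemma sliceX {E : Type*} [NormedAddCommGroup E] [NormedSpace ℝ E]
    {F : ℝ × ℝ → E} {L : ℝ × ℝ →L[ℝ] E} {x t : ℝ} (h : HasFDerivAt F L (x, t)) :
    HasDerivAt (fun y => F (y, t)) (L (1, 0)) x := by
  have h1 : HasDerivAt (fun y : ℝ => ((y, t) : ℝ × ℝ)) ((1 : ℝ), (0 : ℝ)) x :=
    (hasDerivAt_id x).prodMk (hasDerivAt_const x t)
  exact h.comp_hasDerivAt x h1

lemma sliceT {E : Type*} [NormedAddCommGroup E] [NormedSpace ℝ E]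
    {F : ℝ × ℝ → E} {L : ℝ × ℝ →L[ℝ] E} {x t : ℝ} (h : HasFDerivAt F L (x, t)) :
    HasDerivAt (fun s => F (x, s)) (L (0, 1)) t := by
  have h1 : HasDerivAt (fun s : ℝ => ((x, s) : ℝ × ℝ)) ((0 : ℝ), (1 : ℝ)) t :=
    (hasDerivAt_const t x).prodMk (hasDerivAt_id t)
  exact h.comp_hasDerivAt t h1

/-- The Bresch–Desjardins identity (2.2.28): using only the continuity equation,
`∂_x(ρ^α u_x) = −ρ·∂_t(ρ^{α−2}ρ_x) − ρu·∂_x(ρ^{α−2}ρ_x)`. -/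
theorem stmt3 (α : ℝ) (hα : 0 < α)
    (U : Set (ℝ × ℝ)) (hU : IsOpen U) (ρ u : ℝ → ℝ → ℝ)
    (hρ : ContDiffOn ℝ 2 (fun p : ℝ × ℝ => ρ p.1 p.2) U)
    (hu : ContDiffOn ℝ 2 (fun p : ℝ × ℝ => u p.1 p.2) U)
    (hpos : ∀ x t, (x, t) ∈ U → 0 < ρ x t)
    (hmass : ∀ x t, (x, t) ∈ U →
      pderivT ρ x t + pderivX (fun y s => ρ y s * u y s) x t = 0) :
    ∀ x t, (x, t) ∈ U →
      pderivX (fun y s => ρ y s ^ α * pderivX u y s) x t =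
        - ρ x t * pderivT (fun y s => ρ y s ^ (α - 2) * pderivX ρ y s) x t
        - ρ x t * u x t * pderivX (fun y s => ρ y s ^ (α - 2) * pderivX ρ y s) x t := by
  set Fρ : ℝ × ℝ → ℝ := fun p => ρ p.1 p.2 with hFρ
  set Fu : ℝ × ℝ → ℝ := fun p => u p.1 p.2 with hFu
  -- differentiability facts
  have hρd : DifferentiableOn ℝ Fρ U := hρ.differentiableOn (by norm_num)
  have hud : DifferentiableOn ℝ Fu U := hu.differentiableOn (by norm_num)
  have hρ' : ContDiffOn ℝ 1 (fun q => fderiv ℝ Fρ q) U :=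
    hρ.fderiv_of_isOpen hU (by norm_num)
  have hu' : ContDiffOn ℝ 1 (fun q => fderiv ℝ Fu q) U :=
    hu.fderiv_of_isOpen hU (by norm_num)
  have hρ'd : DifferentiableOn ℝ (fun q => fderiv ℝ Fρ q) U := hρ'.differentiableOn one_ne_zero
  have hu'd : DifferentiableOn ℝ (fun q => fderiv ℝ Fu q) U := hu'.differentiableOn one_ne_zero
  -- HasFDerivAt at points of U
  have Hρ : ∀ q ∈ U, HasFDerivAt Fρ (fderiv ℝ Fρ q) q := fun q hq =>
    ((hρd q hq).differentiableAt (hU.mem_nhds hq)).hasFDerivAt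
  have Hu : ∀ q ∈ U, HasFDerivAt Fu (fderiv ℝ Fu q) q := fun q hq =>
    ((hud q hq).differentiableAt (hU.mem_nhds hq)).hasFDerivAt
  have Hρ' : ∀ q ∈ U, HasFDerivAt (fun q => fderiv ℝ Fρ q)
      (fderiv ℝ (fun q => fderiv ℝ Fρ q) q) q := fun q hq =>
    ((hρ'd q hq).differentiableAt (hU.mem_nhds hq)).hasFDerivAt
  have Hu' : ∀ q ∈ U, HasFDerivAt (fun q => fderiv ℝ Fu q)
      (fderiv ℝ (fun q => fderiv ℝ Fu q) q) q := fun q hq =>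
    ((hu'd q hq).differentiableAt (hU.mem_nhds hq)).hasFDerivAt
  -- pointwise identification of pderivX u, pderivX ρ, pderivT ρ on U
  have pXu : ∀ q ∈ U, pderivX u q.1 q.2 = fderiv ℝ Fu q (1, 0) := by
    rintro ⟨y, s⟩ hq
    exact (sliceX (Hu _ hq)).deriv
  have pXρ : ∀ q ∈ U, pderivX ρ q.1 q.2 = fderiv ℝ Fρ q (1, 0) := by
    rintro ⟨y, s⟩ hq
    exact (sliceX (Hρ _ hq)).deriv
  have pTρ : ∀ q ∈ U, pderivT ρ q.1 q.2 = fderiv ℝ Fρ q (0, 1) := by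
    rintro ⟨y, s⟩ hq
    exact (sliceT (Hρ _ hq)).deriv
  intro x t hxt
  have hρx := Hρ (x, t) hxt
  have hux := Hu (x, t) hxt
  have hρ'x := Hρ' (x, t) hxt
  have hu'x := Hu' (x, t) hxt
  set Bρ := fderiv ℝ (fun q => fderiv ℝ Fρ q) (x, t) with hBρ
  set Bu := fderiv ℝ (fun q => fderiv ℝ Fu q) (x, t) with hBu
  set r := ρ x t with hr
  have hrpos : 0 < r := hpos x t hxt
  have hrne : r ≠ 0 := hrpos.ne'
  set uu := u x t with huu
  set rx := fderiv ℝ Fρ (x, t) (1, 0) with hrx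
  set rt := fderiv ℝ Fρ (x, t) (0, 1) with hrt
  set ux := fderiv ℝ Fu (x, t) (1, 0) with hux1
  set rxx := Bρ (1, 0) (1, 0) with hrxx
  set rtx := Bρ (0, 1) (1, 0) with hrtx
  set uxx := Bu (1, 0) (1, 0) with huxx
  -- symmetry of second derivative of ρ
  have hsymm : Bρ (1, 0) (0, 1) = rtx := by
    have hev : ∀ᶠ q in 𝓝 ((x, t) : ℝ × ℝ), HasFDerivAt Fρ (fderiv ℝ Fρ q) q :=
      Filter.eventually_of_mem (hU.mem_nhds hxt) Hρ
    exact second_derivative_symmetric_of_eventually hev hρ'x (1, 0) (0, 1)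
  -- derivatives of slice functions at (x,t)
  have dρX : HasDerivAt (fun y => Fρ (y, t)) rx x := sliceX hρx
  have dρT : HasDerivAt (fun s => Fρ (x, s)) rt t := sliceT hρx
  have duX : HasDerivAt (fun y => Fu (y, t)) ux x := sliceX hux
  -- derivatives of the first partials (as slice functions)
  have dA1ρX : HasDerivAt (fun y => fderiv ℝ Fρ (y, t) (1, 0)) rxx x := by
    have h := (sliceX hρ'x).clm_apply (hasDerivAt_const x ((1 : ℝ), (0 : ℝ)))
    simpa using h
  have dA1ρT : HasDerivAt (fun s => fderiv ℝ Fρ (x, s) (1, 0)) rtx t := by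
    have h := (sliceT hρ'x).clm_apply (hasDerivAt_const t ((1 : ℝ), (0 : ℝ)))
    simpa using h
  have dA2ρX : HasDerivAt (fun y => fderiv ℝ Fρ (y, t) (0, 1)) (Bρ (1, 0) (0, 1)) x := by
    have h := (sliceX hρ'x).clm_apply (hasDerivAt_const x ((0 : ℝ), (1 : ℝ)))
    simpa using h
  have dA1uX : HasDerivAt (fun y => fderiv ℝ Fu (y, t) (1, 0)) uxx x := by
    have h := (sliceX hu'x).clm_apply (hasDerivAt_const x ((1 : ℝ), (0 : ℝ)))
    simpa using h
  -- the mass equation pointwise on U, in fderiv form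
  have mass' : ∀ q ∈ U, fderiv ℝ Fρ q (0, 1)
      + (fderiv ℝ Fρ q (1, 0) * Fu q + Fρ q * fderiv ℝ Fu q (1, 0)) = 0 := by
    rintro ⟨y, s⟩ hq
    have h1 := hmass y s hq
    have h2 : pderivX (fun z w => ρ z w * u z w) y s
        = fderiv ℝ Fρ (y, s) (1, 0) * Fu (y, s) + Fρ (y, s) * fderiv ℝ Fu (y, s) (1, 0) := by
      have := (sliceX (Hρ _ hq)).mul (sliceX (Hu _ hq))
      exact this.deriv
    have h3 := pTρ (y, s) hq
    rw [h3, h2] at h1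
    exact h1
  -- E1 : the mass equation at (x,t)
  have E1 : rt + (rx * uu + r * ux) = 0 := mass' (x, t) hxt
  -- E2 : x-derivative of the mass equation at (x,t)
  have E2 : Bρ (1, 0) (0, 1) + (rxx * uu + rx * ux + (rx * ux + r * uxx)) = 0 := by
    have hder : HasDerivAt (fun y => fderiv ℝ Fρ (y, t) (0, 1)
        + (fderiv ℝ Fρ (y, t) (1, 0) * Fu (y, t) + Fρ (y, t) * fderiv ℝ Fu (y, t) (1, 0)))
        (Bρ (1, 0) (0, 1) + (rxx * uu + rx * ux + (rx * ux + r * uxx))) x :=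
      dA2ρX.add ((dA1ρX.mul duX).add (dρX.mul dA1uX))
    have hzero : (fun y => fderiv ℝ Fρ (y, t) (0, 1)
        + (fderiv ℝ Fρ (y, t) (1, 0) * Fu (y, t) + Fρ (y, t) * fderiv ℝ Fu (y, t) (1, 0)))
        =ᶠ[𝓝 x] fun _ => (0 : ℝ) := by
      have hV : {y : ℝ | (y, t) ∈ U} ∈ 𝓝 x := by
        have : Continuous fun y : ℝ => ((y, t) : ℝ × ℝ) := by fun_prop
        exact this.continuousAt.preimage_mem_nhds (hU.mem_nhds hxt)
      filter_upwards [hV] with y hy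
      exact mass' (y, t) hy
    rw [← hder.deriv, hzero.deriv_eq]
    simp
  -- compute the left-hand side
  have LHS : pderivX (fun y s => ρ y s ^ α * pderivX u y s) x t
      = (rx * α * r ^ (α - 1)) * ux + r ^ α * uxx := by
    have heq : (fun y => ρ y t ^ α * pderivX u y t)
        =ᶠ[𝓝 x] fun y => Fρ (y, t) ^ α * fderiv ℝ Fu (y, t) (1, 0) := by
      have hV : {y : ℝ | (y, t) ∈ U} ∈ 𝓝 x := by
        have : Continuous fun y : ℝ => ((y, t) : ℝ × ℝ) := by fun_prop
        exact this.continuousAt.preimage_mem_nhds (hU.mem_nhds hxt)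
      filter_upwards [hV] with y hy
      rw [pXu (y, t) hy]
    have hder : HasDerivAt (fun y => Fρ (y, t) ^ α * fderiv ℝ Fu (y, t) (1, 0))
        ((rx * α * r ^ (α - 1)) * ux + r ^ α * uxx) x :=
      (dρX.rpow_const (Or.inl hrne)).mul dA1uX
    rw [pderivX, heq.deriv_eq]
    exact hder.deriv
  -- compute the time-derivative term on the right
  have RT : pderivT (fun y s => ρ y s ^ (α - 2) * pderivX ρ y s) x t
      = (rt * (α - 2) * r ^ (α - 2 - 1)) * rx + r ^ (α - 2) * rtx := by
    have heq : (fun s => ρ x s ^ (α - 2) * pderivX ρ x s)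
        =ᶠ[𝓝 t] fun s => Fρ (x, s) ^ (α - 2) * fderiv ℝ Fρ (x, s) (1, 0) := by
      have hV : {s : ℝ | (x, s) ∈ U} ∈ 𝓝 t := by
        have : Continuous fun s : ℝ => ((x, s) : ℝ × ℝ) := by fun_prop
        exact this.continuousAt.preimage_mem_nhds (hU.mem_nhds hxt)
      filter_upwards [hV] with s hs
      rw [pXρ (x, s) hs]
    have hder : HasDerivAt (fun s => Fρ (x, s) ^ (α - 2) * fderiv ℝ Fρ (x, s) (1, 0))
        ((rt * (α - 2) * r ^ (α - 2 - 1)) * rx + r ^ (α - 2) * rtx) t :=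
      (dρT.rpow_const (Or.inl hrne)).mul dA1ρT
    rw [pderivT, heq.deriv_eq]
    exact hder.deriv
  -- compute the space-derivative term on the right
  have RX : pderivX (fun y s => ρ y s ^ (α - 2) * pderivX ρ y s) x t
      = (rx * (α - 2) * r ^ (α - 2 - 1)) * rx + r ^ (α - 2) * rxx := by
    have heq : (fun y => ρ y t ^ (α - 2) * pderivX ρ y t)
        =ᶠ[𝓝 x] fun y => Fρ (y, t) ^ (α - 2) * fderiv ℝ Fρ (y, t) (1, 0) := by
      have hV : {y : ℝ | (y, t) ∈ U} ∈ 𝓝 x := by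
        have : Continuous fun y : ℝ => ((y, t) : ℝ × ℝ) := by fun_prop
        exact this.continuousAt.preimage_mem_nhds (hU.mem_nhds hxt)
      filter_upwards [hV] with y hy
      rw [pXρ (y, t) hy]
    have hder : HasDerivAt (fun y => Fρ (y, t) ^ (α - 2) * fderiv ℝ Fρ (y, t) (1, 0))
        ((rx * (α - 2) * r ^ (α - 2 - 1)) * rx + r ^ (α - 2) * rxx) x :=
      (dρX.rpow_const (Or.inl hrne)).mul dA1ρX
    rw [pderivX, heq.deriv_eq]
    exact hder.deriv
  -- final algebra
  rw [LHS, RT, RX]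
  have hrt' : rt = -(rx * uu + r * ux) := by linarith
  have hrtx' : rtx = -(rxx * uu + rx * ux + (rx * ux + r * uxx)) := by
    rw [← hsymm]; linarith
  have e1 : r ^ (α - 1) = r ^ (α - 3) * r ^ (2 : ℕ) := by
    rw [← Real.rpow_natCast r 2, ← Real.rpow_add hrpos]
    congr 1
    push_cast
    ring
  have e2 : r ^ (α - 2) = r ^ (α - 3) * r := by
    rw [show α - 2 = (α - 3) + 1 by ring, Real.rpow_add hrpos, Real.rpow_one]
  have e3 : r ^ (α - 2 - 1) = r ^ (α - 3) := by rw [show α - 2 - 1 = α - 3 by ring]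
  have e4 : r ^ α = r ^ (α - 3) * r ^ (3 : ℕ) := by
    rw [← Real.rpow_natCast r 3, ← Real.rpow_add hrpos]
    congr 1
    push_cast
    ring
  rw [hrt', hrtx', e1, e2, e3, e4]
  ring
end

section
/- Let γ > 1, α > 0 and ρ̄ ≥ 0 be a constant, and let U ⊆ ℝ × ℝ be open. Suppose ρ, u : U → ℝ are twice continuously differentiable, ρ > 0 on U, and the equations ρ_t + (ρu)_x = 0 and (ρu)_t + (ρu² + ρ^γ)_x = (ρ^α u_x)_x hold pointwise on U. Then at every point of U, ∂_t( (1/2)·ρ·(u + ρ^{α−2}ρ_x)² + ρ·Ψ(ρ, ρ̄) ) + ∂_x( (1/2)·ρ·u·(u + ρ^{α−2}ρ_x)² + ρ·u·Ψ(ρ, ρ̄) + u·(ρ^γ − ρ̄^γ) ) + (4γ/(γ+α−1)²)·( ∂_x( ρ^{(γ+α−1)/2} ) )² = 0. -/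
open Real

noncomputable def dX (F : ℝ × ℝ → ℝ) (q : ℝ × ℝ) : ℝ := fderiv ℝ F q (1, 0)
noncomputable def dT (F : ℝ × ℝ → ℝ) (q : ℝ × ℝ) : ℝ := fderiv ℝ F q (0, 1)

lemma sliceX_s5 {F : ℝ × ℝ → ℝ} {x t : ℝ} (hF : DifferentiableAt ℝ F (x, t)) :
    HasDerivAt (fun y => F (y, t)) (dX F (x, t)) x := by
  have h : HasDerivAt (fun y : ℝ => (y, t)) ((1 : ℝ), (0 : ℝ)) x :=
    (hasDerivAt_id x).prodMk (hasDerivAt_const x t)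
  exact hF.hasFDerivAt.comp_hasDerivAt x h

lemma sliceT_s5 {F : ℝ × ℝ → ℝ} {x t : ℝ} (hF : DifferentiableAt ℝ F (x, t)) :
    HasDerivAt (fun s => F (x, s)) (dT F (x, t)) t := by
  have h : HasDerivAt (fun s : ℝ => (x, s)) ((0 : ℝ), (1 : ℝ)) t :=
    (hasDerivAt_const t x).prodMk (hasDerivAt_id t)
  exact hF.hasFDerivAt.comp_hasDerivAt t h

lemma dX_diff {F : ℝ × ℝ → ℝ} {p : ℝ × ℝ} (hF : ContDiffAt ℝ 2 F p) :
    DifferentiableAt ℝ (dX F) p := by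
  have h1 : ContDiffAt ℝ 1 (fderiv ℝ F) p := hF.fderiv_right (by norm_num)
  exact (ContinuousLinearMap.apply ℝ ℝ ((1 : ℝ), (0 : ℝ))).differentiableAt.comp p
    (h1.differentiableAt one_ne_zero)

lemma dT_diff {F : ℝ × ℝ → ℝ} {p : ℝ × ℝ} (hF : ContDiffAt ℝ 2 F p) :
    DifferentiableAt ℝ (dT F) p := by
  have h1 : ContDiffAt ℝ 1 (fderiv ℝ F) p := hF.fderiv_right (by norm_num)
  exact (ContinuousLinearMap.apply ℝ ℝ ((0 : ℝ), (1 : ℝ))).differentiableAt.comp p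
    (h1.differentiableAt one_ne_zero)

lemma dapply_fderiv {F : ℝ × ℝ → ℝ} {p : ℝ × ℝ} (hF : ContDiffAt ℝ 2 F p) (w z : ℝ × ℝ) :
    fderiv ℝ (fun q => fderiv ℝ F q w) p z = fderiv ℝ (fderiv ℝ F) p z w := by
  have h1 : ContDiffAt ℝ 1 (fderiv ℝ F) p := hF.fderiv_right (by norm_num)
  have h := ((ContinuousLinearMap.apply ℝ ℝ w).hasFDerivAt.comp p
    (h1.differentiableAt one_ne_zero).hasFDerivAt).fderiv
  calc fderiv ℝ (fun q => fderiv ℝ F q w) p z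
      = fderiv ℝ ((ContinuousLinearMap.apply ℝ ℝ w) ∘ (fderiv ℝ F)) p z := rfl
    _ = fderiv ℝ (fderiv ℝ F) p z w := by rw [h]; rfl

lemma clairaut {F : ℝ × ℝ → ℝ} {p : ℝ × ℝ} (hF : ContDiffAt ℝ 2 F p) :
    dX (dT F) p = dT (dX F) p := by
  have hs := hF.isSymmSndFDerivAt (by norm_num)
  show fderiv ℝ (fun q => fderiv ℝ F q (0,1)) p (1,0)
      = fderiv ℝ (fun q => fderiv ℝ F q (1,0)) p (0,1)
  rw [dapply_fderiv hF, dapply_fderiv hF]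
  exact hs _ _

lemma psi_mul {γ z ρb : ℝ} (h : γ - 1 ≠ 0) (hz : z ≠ 0) :
    z * psi γ z ρb = 1 / (γ - 1) * (z ^ γ - ρb ^ γ - γ * ρb ^ (γ - 1) * (z - ρb)) := by
  unfold psi
  field_simp


/-- The pointwise Bresch–Desjardins entropy identity (2.2.35) for the
one-dimensional compressible isentropic Navier–Stokes equations with viscosity
`μ(ρ) = ρ^α` and pressure `P(ρ) = ρ^γ`. -/
theorem stmt5 (γ α ρb : ℝ) (hγ : 1 < γ) (hα : 0 < α) (hρb : 0 ≤ ρb)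
    (U : Set (ℝ × ℝ)) (hU : IsOpen U) (ρ u : ℝ → ℝ → ℝ)
    (hρ : ContDiffOn ℝ 2 (fun p : ℝ × ℝ => ρ p.1 p.2) U)
    (hu : ContDiffOn ℝ 2 (fun p : ℝ × ℝ => u p.1 p.2) U)
    (hpos : ∀ x t, (x, t) ∈ U → 0 < ρ x t)
    (hmass : ∀ x t, (x, t) ∈ U →
      pderivT ρ x t + pderivX (fun y s => ρ y s * u y s) x t = 0)
    (hmom : ∀ x t, (x, t) ∈ U →
      pderivT (fun y s => ρ y s * u y s) x t
        + pderivX (fun y s => ρ y s * u y s ^ 2 + ρ y s ^ γ) x t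
        = pderivX (fun y s => ρ y s ^ α * pderivX u y s) x t) :
    ∀ x t, (x, t) ∈ U →
      pderivT (fun y s => (1 / 2) * ρ y s
            * (u y s + ρ y s ^ (α - 2) * pderivX ρ y s) ^ 2
            + ρ y s * psi γ (ρ y s) ρb) x t
        + pderivX (fun y s => (1 / 2) * ρ y s * u y s
            * (u y s + ρ y s ^ (α - 2) * pderivX ρ y s) ^ 2
            + ρ y s * u y s * psi γ (ρ y s) ρb
            + u y s * (ρ y s ^ γ - ρb ^ γ)) x t
        + (4 * γ / (γ + α - 1) ^ 2)
            * (pderivX (fun y s => ρ y s ^ ((γ + α - 1) / 2)) x t) ^ 2 = 0 := by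
  intro x t hxt
  have hγ1 : γ - 1 ≠ 0 := ne_of_gt (by linarith)
  -- basic regularity facts
  have hρU : ∀ q ∈ U, ContDiffAt ℝ 2 (fun q : ℝ × ℝ => ρ q.1 q.2) q :=
    fun q hq => (hρ q hq).contDiffAt (hU.mem_nhds hq)
  have huU : ∀ q ∈ U, ContDiffAt ℝ 2 (fun q : ℝ × ℝ => u q.1 q.2) q :=
    fun q hq => (hu q hq).contDiffAt (hU.mem_nhds hq)
  have hρd : ∀ q ∈ U, DifferentiableAt ℝ (fun q : ℝ × ℝ => ρ q.1 q.2) q :=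
    fun q hq => (hρU q hq).differentiableAt (by norm_num)
  have hud : ∀ q ∈ U, DifferentiableAt ℝ (fun q : ℝ × ℝ => u q.1 q.2) q :=
    fun q hq => (huU q hq).differentiableAt (by norm_num)
  -- abbreviations for the derivatives at (x, t)
  set r : ℝ := ρ x t with hrdef
  set v : ℝ := u x t with hvdef
  set rx : ℝ := dX (fun q : ℝ × ℝ => ρ q.1 q.2) (x, t) with hrxdef
  set rt : ℝ := dT (fun q : ℝ × ℝ => ρ q.1 q.2) (x, t) with hrtdef
  set vx : ℝ := dX (fun q : ℝ × ℝ => u q.1 q.2) (x, t) with hvxdef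
  set vt : ℝ := dT (fun q : ℝ × ℝ => u q.1 q.2) (x, t) with hvtdef
  set rxx : ℝ := dX (dX (fun q : ℝ × ℝ => ρ q.1 q.2)) (x, t) with hrxxdef
  set rxt : ℝ := dT (dX (fun q : ℝ × ℝ => ρ q.1 q.2)) (x, t) with hrxtdef
  set vxx : ℝ := dX (dX (fun q : ℝ × ℝ => u q.1 q.2)) (x, t) with hvxxdef
  set A : ℝ := r ^ (α - 3) with hAdef
  set G : ℝ := r ^ (γ - 1) with hGdef
  have hr' : 0 < r := hpos x t hxt
  -- pointwise identification of pderiv with fderiv-based derivatives on U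
  have hpXρ : ∀ y s, (y, s) ∈ U →
      pderivX ρ y s = dX (fun q : ℝ × ℝ => ρ q.1 q.2) (y, s) :=
    fun y s h => (sliceX_s5 (hρd _ h)).deriv
  have hpXu : ∀ y s, (y, s) ∈ U →
      pderivX u y s = dX (fun q : ℝ × ℝ => u q.1 q.2) (y, s) :=
    fun y s h => (sliceX_s5 (hud _ h)).deriv
  -- neighbourhood events
  have hUx : ∀ᶠ y in nhds x, (y, t) ∈ U :=
    ((continuous_id.prodMk continuous_const).continuousAt).preimage_mem_nhds
      (hU.mem_nhds hxt)
  have hUt : ∀ᶠ s in nhds t, (x, s) ∈ U :=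
    ((continuous_const.prodMk continuous_id).continuousAt).preimage_mem_nhds
      (hU.mem_nhds hxt)
  -- slice derivatives at (x,t)
  have hfX : HasDerivAt (fun y => ρ y t) rx x := sliceX_s5 (hρd _ hxt)
  have hgX : HasDerivAt (fun y => u y t) vx x := sliceX_s5 (hud _ hxt)
  have hfT : HasDerivAt (fun s => ρ x s) rt t := sliceT_s5 (hρd _ hxt)
  have hgT : HasDerivAt (fun s => u x s) vt t := sliceT_s5 (hud _ hxt)
  have hhX : HasDerivAt (fun y => dX (fun q : ℝ × ℝ => ρ q.1 q.2) (y, t)) rxx x :=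
    sliceX_s5 (dX_diff (hρU _ hxt))
  have hhT : HasDerivAt (fun s => dX (fun q : ℝ × ℝ => ρ q.1 q.2) (x, s)) rxt t :=
    sliceT_s5 (dX_diff (hρU _ hxt))
  have hkX : HasDerivAt (fun y => dX (fun q : ℝ × ℝ => u q.1 q.2) (y, t)) vxx x :=
    sliceX_s5 (dX_diff (huU _ hxt))
  -- mass equation at (x,t)
  have e1 : rt + (rx * v + r * vx) = 0 := by
    have hm := hmass x t hxt
    have h1 : pderivT ρ x t = rt := (sliceT_s5 (hρd _ hxt)).deriv
    have h2 : pderivX (fun y s => ρ y s * u y s) x t = rx * v + r * vx :=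
      (hfX.mul hgX).deriv
    rw [h1, h2] at hm
    exact hm
  -- momentum equation at (x,t)
  have e2 : rt * v + r * vt + ((rx * v ^ 2 + r * (((2:ℕ):ℝ) * v ^ 1 * vx)) + rx * γ * r ^ (γ - 1))
      = rx * α * r ^ (α - 1) * vx + r ^ α * vxx := by
    have hm := hmom x t hxt
    have h1 : pderivT (fun y s => ρ y s * u y s) x t = rt * v + r * vt :=
      ((sliceT_s5 (hρd _ hxt)).mul (sliceT_s5 (hud _ hxt))).deriv
    have h2 : pderivX (fun y s => ρ y s * u y s ^ 2 + ρ y s ^ γ) x t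
        = (rx * v ^ 2 + r * (((2:ℕ):ℝ) * v ^ 1 * vx)) + rx * γ * r ^ (γ - 1) :=
      ((hfX.mul (hgX.pow 2)).add (hfX.rpow_const (Or.inl hr'.ne'))).deriv
    have h3 : pderivX (fun y s => ρ y s ^ α * pderivX u y s) x t
        = rx * α * r ^ (α - 1) * vx + r ^ α * vxx := by
      have heq : (fun y => ρ y t ^ α * pderivX u y t) =ᶠ[nhds x]
          (fun y => ρ y t ^ α * dX (fun q : ℝ × ℝ => u q.1 q.2) (y, t)) := by
        filter_upwards [hUx] with y hy
        rw [hpXu y t hy]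
      exact heq.deriv_eq.trans ((hfX.rpow_const (Or.inl hr'.ne')).mul hkX).deriv
    rw [h1, h2, h3] at hm
    exact hm
  -- x-derivative of the mass equation at (x,t)
  have e3 : dX (dT (fun q : ℝ × ℝ => ρ q.1 q.2)) (x, t)
      + ((rxx * v + rx * vx) + (rx * vx + r * vxx)) = 0 := by
    have hz : (fun y => dT (fun q : ℝ × ℝ => ρ q.1 q.2) (y, t)
        + (dX (fun q : ℝ × ℝ => ρ q.1 q.2) (y, t) * u y t
          + ρ y t * dX (fun q : ℝ × ℝ => u q.1 q.2) (y, t))) =ᶠ[nhds x]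
        (fun _ => (0:ℝ)) := by
      filter_upwards [hUx] with y hy
      have hm := hmass y t hy
      have h1 : pderivT ρ y t = dT (fun q : ℝ × ℝ => ρ q.1 q.2) (y, t) :=
        (sliceT_s5 (hρd _ hy)).deriv
      have h2 : pderivX (fun y s => ρ y s * u y s) y t
          = dX (fun q : ℝ × ℝ => ρ q.1 q.2) (y, t) * u y t
            + ρ y t * dX (fun q : ℝ × ℝ => u q.1 q.2) (y, t) :=
        ((sliceX_s5 (hρd _ hy)).mul (sliceX_s5 (hud _ hy))).deriv
      rw [h1, h2] at hm
      exact hm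
    have hD3 : HasDerivAt (fun y => dT (fun q : ℝ × ℝ => ρ q.1 q.2) (y, t)
        + (dX (fun q : ℝ × ℝ => ρ q.1 q.2) (y, t) * u y t
          + ρ y t * dX (fun q : ℝ × ℝ => u q.1 q.2) (y, t)))
        (dX (dT (fun q : ℝ × ℝ => ρ q.1 q.2)) (x, t)
          + ((rxx * v + rx * vx) + (rx * vx + r * vxx))) x :=
      (sliceX_s5 (dT_diff (hρU _ hxt))).add ((hhX.mul hgX).add (hfX.mul hkX))
    have h0 := hz.deriv_eq
    simp only [deriv_const'] at h0
    exact hD3.deriv.symm.trans h0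
  rw [clairaut (hρU _ hxt)] at e3
  -- time part of the entropy
  have hT : pderivT (fun y s => (1 / 2) * ρ y s
        * (u y s + ρ y s ^ (α - 2) * pderivX ρ y s) ^ 2
        + ρ y s * psi γ (ρ y s) ρb) x t
      = 1 / 2 * rt * (v + r ^ (α - 2) * rx) ^ 2
        + 1 / 2 * r * (((2:ℕ):ℝ) * (v + r ^ (α - 2) * rx) ^ 1
            * (vt + (rt * (α - 2) * r ^ (α - 2 - 1) * rx + r ^ (α - 2) * rxt)))
        + 1 / (γ - 1) * (rt * γ * r ^ (γ - 1) - γ * ρb ^ (γ - 1) * rt) := by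
    have heq : (fun s => (1 / 2) * ρ x s
          * (u x s + ρ x s ^ (α - 2) * pderivX ρ x s) ^ 2
          + ρ x s * psi γ (ρ x s) ρb) =ᶠ[nhds t]
        (fun s => (1 / 2) * ρ x s
          * (u x s + ρ x s ^ (α - 2) * dX (fun q : ℝ × ℝ => ρ q.1 q.2) (x, s)) ^ 2
          + 1 / (γ - 1) * (ρ x s ^ γ - ρb ^ γ - γ * ρb ^ (γ - 1) * (ρ x s - ρb))) := by
      filter_upwards [hUt] with s hs
      rw [hpXρ x s hs, psi_mul hγ1 (hpos x s hs).ne']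
    have hD : HasDerivAt (fun s => (1 / 2) * ρ x s
          * (u x s + ρ x s ^ (α - 2) * dX (fun q : ℝ × ℝ => ρ q.1 q.2) (x, s)) ^ 2
          + 1 / (γ - 1) * (ρ x s ^ γ - ρb ^ γ - γ * ρb ^ (γ - 1) * (ρ x s - ρb)))
        (1 / 2 * rt * (v + r ^ (α - 2) * rx) ^ 2
          + 1 / 2 * r * (((2:ℕ):ℝ) * (v + r ^ (α - 2) * rx) ^ 1
              * (vt + (rt * (α - 2) * r ^ (α - 2 - 1) * rx + r ^ (α - 2) * rxt)))
          + 1 / (γ - 1) * (rt * γ * r ^ (γ - 1) - γ * ρb ^ (γ - 1) * rt)) t :=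
      ((hfT.const_mul (1/2)).mul
          ((hgT.add ((hfT.rpow_const (Or.inl hr'.ne')).mul hhT)).pow 2)).add
        ((((hfT.rpow_const (Or.inl hr'.ne')).sub_const (ρb ^ γ)).sub
            ((hfT.sub_const ρb).const_mul (γ * ρb ^ (γ - 1)))).const_mul (1 / (γ - 1)))
    exact heq.deriv_eq.trans hD.deriv
  -- space part of the entropy
  have hX : pderivX (fun y s => (1 / 2) * ρ y s * u y s
        * (u y s + ρ y s ^ (α - 2) * pderivX ρ y s) ^ 2
        + ρ y s * u y s * psi γ (ρ y s) ρb
        + u y s * (ρ y s ^ γ - ρb ^ γ)) x t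
      = ((1 / 2 * rx * v + 1 / 2 * r * vx) * (v + r ^ (α - 2) * rx) ^ 2
          + 1 / 2 * r * v * (((2:ℕ):ℝ) * (v + r ^ (α - 2) * rx) ^ 1
              * (vx + (rx * (α - 2) * r ^ (α - 2 - 1) * rx + r ^ (α - 2) * rxx)))
          + (vx * (1 / (γ - 1) * (r ^ γ - ρb ^ γ - γ * ρb ^ (γ - 1) * (r - ρb)))
            + v * (1 / (γ - 1) * (rx * γ * r ^ (γ - 1) - γ * ρb ^ (γ - 1) * rx))))
        + (vx * (r ^ γ - ρb ^ γ) + v * (rx * γ * r ^ (γ - 1))) := by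
    have heq : (fun y => (1 / 2) * ρ y t * u y t
          * (u y t + ρ y t ^ (α - 2) * pderivX ρ y t) ^ 2
          + ρ y t * u y t * psi γ (ρ y t) ρb
          + u y t * (ρ y t ^ γ - ρb ^ γ)) =ᶠ[nhds x]
        (fun y => (1 / 2) * ρ y t * u y t
          * (u y t + ρ y t ^ (α - 2) * dX (fun q : ℝ × ℝ => ρ q.1 q.2) (y, t)) ^ 2
          + u y t * (1 / (γ - 1) * (ρ y t ^ γ - ρb ^ γ - γ * ρb ^ (γ - 1) * (ρ y t - ρb)))
          + u y t * (ρ y t ^ γ - ρb ^ γ)) := by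
      filter_upwards [hUx] with y hy
      rw [hpXρ y t hy]
      have hps := psi_mul (γ := γ) (z := ρ y t) (ρb := ρb) hγ1 (hpos y t hy).ne'
      linear_combination u y t * hps
    have hD : HasDerivAt (fun y => (1 / 2) * ρ y t * u y t
          * (u y t + ρ y t ^ (α - 2) * dX (fun q : ℝ × ℝ => ρ q.1 q.2) (y, t)) ^ 2
          + u y t * (1 / (γ - 1) * (ρ y t ^ γ - ρb ^ γ - γ * ρb ^ (γ - 1) * (ρ y t - ρb)))
          + u y t * (ρ y t ^ γ - ρb ^ γ))
        (((1 / 2 * rx * v + 1 / 2 * r * vx) * (v + r ^ (α - 2) * rx) ^ 2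
          + 1 / 2 * r * v * (((2:ℕ):ℝ) * (v + r ^ (α - 2) * rx) ^ 1
              * (vx + (rx * (α - 2) * r ^ (α - 2 - 1) * rx + r ^ (α - 2) * rxx)))
          + (vx * (1 / (γ - 1) * (r ^ γ - ρb ^ γ - γ * ρb ^ (γ - 1) * (r - ρb)))
            + v * (1 / (γ - 1) * (rx * γ * r ^ (γ - 1) - γ * ρb ^ (γ - 1) * rx))))
        + (vx * (r ^ γ - ρb ^ γ) + v * (rx * γ * r ^ (γ - 1)))) x := by
      have B1 := (((hfX.const_mul (1/2)).mul hgX).mul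
        ((hgX.add ((hfX.rpow_const (p := α - 2) (Or.inl hr'.ne')).mul hhX)).pow 2))
      have B2 := hgX.mul ((((hfX.rpow_const (p := γ) (Or.inl hr'.ne')).sub_const (ρb ^ γ)).sub
        ((hfX.sub_const ρb).const_mul (γ * ρb ^ (γ - 1)))).const_mul (1 / (γ - 1)))
      have B3 := hgX.mul ((hfX.rpow_const (p := γ) (Or.inl hr'.ne')).sub_const (ρb ^ γ))
      exact (B1.add B2).add B3
    exact heq.deriv_eq.trans hD.deriv
  -- the dissipation term
  have hP : pderivX (fun y s => ρ y s ^ ((γ + α - 1) / 2)) x t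
      = rx * ((γ + α - 1) / 2) * r ^ ((γ + α - 1) / 2 - 1) :=
    ((sliceX_s5 (hρd _ hxt)).rpow_const (Or.inl hr'.ne')).deriv
  have hgane : γ + α - 1 ≠ 0 := ne_of_gt (by linarith)
  have hQ : 4 * γ / (γ + α - 1) ^ 2
      * (rx * ((γ + α - 1) / 2) * r ^ ((γ + α - 1) / 2 - 1)) ^ 2
      = γ * (G * (A * r)) * rx ^ 2 := by
    have hC : (r ^ ((γ + α - 1) / 2 - 1)) ^ 2 = G * (A * r) := by
      rw [sq, ← Real.rpow_add hr',
        show (γ + α - 1) / 2 - 1 + ((γ + α - 1) / 2 - 1) = γ - 1 + (α - 3 + 1) from by ring,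
        Real.rpow_add hr', Real.rpow_add hr', Real.rpow_one]
    rw [mul_pow, mul_pow, hC]
    field_simp
    ring
  -- auxiliary power identities
  have Ea2 : r ^ (α - 2) = A * r := by
    rw [show α - 2 = α - 3 + 1 from by ring, Real.rpow_add hr', Real.rpow_one]
  have Ea21 : r ^ (α - 2 - 1) = A := by
    rw [show α - 2 - 1 = α - 3 from by ring]
  have Ea1 : r ^ (α - 1) = A * (r * r) := by
    rw [show α - 1 = α - 3 + 1 + 1 from by ring, Real.rpow_add hr', Real.rpow_add hr',
      Real.rpow_one]
    ring
  have Ea0 : r ^ α = A * (r * r * r) := by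
    rw [show α = α - 3 + 1 + 1 + 1 from by ring, Real.rpow_add hr', Real.rpow_add hr',
      Real.rpow_add hr', Real.rpow_one]
    ring
  have Eg : r ^ γ = G * r := by
    rw [show γ = γ - 1 + 1 from by ring, Real.rpow_add hr', Real.rpow_one]
  have hc : ρb ^ (γ - 1) * ρb = ρb ^ γ := by
    rcases eq_or_lt_of_le hρb with h | h
    · rw [← h, Real.zero_rpow (by linarith : γ - 1 ≠ 0),
        Real.zero_rpow (by linarith : γ ≠ 0)]
      norm_num
    · have h2 : ρb ^ (γ - 1) * ρb ^ (1:ℝ) = ρb ^ (γ - 1 + 1) := (Real.rpow_add h _ _).symm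
      rw [Real.rpow_one] at h2
      rw [show γ - 1 + 1 = γ from by ring] at h2
      exact h2
  have hD1 : (γ - 1) * (1 / (γ - 1)) = 1 := by field_simp
  -- put everything together
  rw [hT, hX, hP, hQ]
  linear_combination
    ((-1)*(1/(γ-1))*γ*ρb ^ (γ-1) + G*(1/(γ-1))*γ + (-1/2)*v*v + (-2)*r*v*rx*A
      + r*v*rx*A*α + (-3/2)*r*r*rx*rx*A*A + r*r*rx*rx*A*A*α) * e1
    + (v + r*rx*A) * e2
    + (r*r*v*A + r*r*r*rx*A*A) * e3
    + (vx*(1/(γ-1))*γ) * hc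
    + (vx*ρb ^ γ + (-1)*r*vx*G) * hD1
    + ((1/2)*rx*rx*rt*(r ^ (α-2)) + v*rx*rt + (1/2)*v*rx*rx*rx*(r ^ (α-2)) + v*v*rx*rx
      + r*rx*vt + r*rx*rxt*(r ^ (α-2)) + (1/2)*r*rx*rx*vx*(r ^ (α-2))
      + (-2)*r*rx*rx*rt*(r ^ (α-2-1)) + r*rx*rx*rt*α*(r ^ (α-2-1)) + (1/2)*r*rx*rx*rt*A
      + r*v*rxt + 2*r*v*rx*vx + r*v*rx*rxx*(r ^ (α-2)) + (-2)*r*v*rx*rx*rx*(r ^ (α-2-1))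
      + r*v*rx*rx*rx*α*(r ^ (α-2-1)) + (1/2)*r*v*rx*rx*rx*A + r*v*v*rxx
      + r*r*rx*rxt*A + (1/2)*r*r*rx*rx*vx*A + r*r*v*rx*rxx*A) * Ea2
    + ((-2)*r*v*rx*rt + r*v*rx*rt*α + (-2)*r*v*v*rx*rx + r*v*v*rx*rx*α
      + (-2)*r*r*rx*rx*rt*A + r*r*rx*rx*rt*A*α + (-2)*r*r*v*rx*rx*rx*A
      + r*r*v*rx*rx*rx*A*α) * Ea21
    + (v*rx*vx*α + r*rx*rx*vx*A*α) * Ea1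
    + (v*vxx + r*rx*vxx*A) * Ea0
    + (vx + vx*(1/(γ-1))) * Eg
end

section
/- Let γ > 1, 0 < α < 1/2, ρ̄ > 0 and E > 0. There exists a constant C > 0, depending only on γ, α, ρ̄ and E, with the following property: if ρ : ℝ → ℝ is continuously differentiable, ρ(x) > 0 for all x, lim_{x→−∞} ρ(x) = ρ̄, ∫_ℝ ρ(x)·Ψ(ρ(x), ρ̄) dx ≤ E and ∫_ℝ ( (ρ^{α−1/2})'(x) )² dx ≤ E, then ρ(x) ≤ C for all x ∈ ℝ. -/
open Real MeasureTheory Filter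

lemma bern {γ a b : ℝ} (hγ : 1 ≤ γ) (ha : 0 < a) (hb : 0 ≤ b) :
    a ^ γ + γ * a ^ (γ - 1) * (b - a) ≤ b ^ γ := by
  have hs : (-1 : ℝ) ≤ b / a - 1 := by
    have : 0 ≤ b / a := div_nonneg hb ha.le
    linarith
  have h := one_add_mul_self_le_rpow_one_add hs hγ
  have h1 : (1 : ℝ) + (b / a - 1) = b / a := by ring
  rw [h1] at h
  have hag : (0 : ℝ) < a ^ γ := Real.rpow_pos_of_pos ha _
  have hdiv : (b / a) ^ γ = b ^ γ / a ^ γ := Real.div_rpow hb ha.le γ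
  have h2 := mul_le_mul_of_nonneg_left h hag.le
  rw [hdiv] at h2
  have h3 : a ^ γ * (b ^ γ / a ^ γ) = b ^ γ := by field_simp
  rw [h3] at h2
  have hsub : a ^ (γ - 1) = a ^ γ / a := by
    rw [Real.rpow_sub ha, Real.rpow_one]
  rw [hsub]
  have key : a ^ γ + γ * (a ^ γ / a) * (b - a) = a ^ γ * (1 + γ * (b / a - 1)) := by
    field_simp
  rw [key]; exact h2

lemma psi_eq {γ ρb : ℝ} (hγ : 1 < γ) (r : ℝ) (hr : 0 < r) :
    r * psi γ r ρb = (r ^ γ - ρb ^ γ - γ * ρb ^ (γ - 1) * (r - ρb)) / (γ - 1) := by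
  unfold psi
  have h1 : (γ - 1) ≠ 0 := by linarith
  field_simp

lemma g_nonneg {γ ρb : ℝ} (hγ : 1 < γ) (hρb : 0 < ρb) {r : ℝ} (hr : 0 ≤ r) :
    0 ≤ (r ^ γ - ρb ^ γ - γ * ρb ^ (γ - 1) * (r - ρb)) / (γ - 1) := by
  have h := bern hγ.le hρb hr
  have : 0 < γ - 1 := by linarith
  exact div_nonneg (by linarith) this.le

lemma g_mono {γ ρb : ℝ} (hγ : 1 < γ) (hρb : 0 < ρb) {K r : ℝ} (hK : ρb ≤ K) (hr : K ≤ r) :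
    (K ^ γ - ρb ^ γ - γ * ρb ^ (γ - 1) * (K - ρb)) / (γ - 1) ≤
      (r ^ γ - ρb ^ γ - γ * ρb ^ (γ - 1) * (r - ρb)) / (γ - 1) := by
  have hK0 : 0 < K := lt_of_lt_of_le hρb hK
  have h1 := bern hγ.le hK0 (hK0.le.trans hr)
  have h2 : ρb ^ (γ - 1) ≤ K ^ (γ - 1) :=
    Real.rpow_le_rpow hρb.le hK (by linarith)
  have h3 : γ * ρb ^ (γ - 1) * (r - K) ≤ γ * K ^ (γ - 1) * (r - K) := by
    have h0 := sub_nonneg.2 hr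
    nlinarith [mul_nonneg (mul_nonneg (show (0:ℝ) ≤ γ by linarith) (sub_nonneg.2 h2)) h0]
  have h4 : 0 < γ - 1 := by linarith
  rw [div_le_div_iff_of_pos_right h4]
  nlinarith

lemma exists_K (γ α ρb E : ℝ) (hγ : 1 < γ) (hα0 : 0 < α) (hρb : 0 < ρb) (hE : 0 < E) :
    ∃ K : ℝ, ρb + 1 ≤ K ∧
      K ^ γ / (2 * (γ - 1)) ≤ (K ^ γ - ρb ^ γ - γ * ρb ^ (γ - 1) * (K - ρb)) / (γ - 1) ∧
      8 * E ^ 2 ≤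
        ((K ^ γ - ρb ^ γ - γ * ρb ^ (γ - 1) * (K - ρb)) / (γ - 1)) * K ^ (2 * α - 1) := by
  have h4 : (0:ℝ) < γ - 1 := by linarith
  have ev1 : ∀ᶠ K : ℝ in atTop, 2 * (ρb ^ γ + γ * ρb ^ (γ - 1)) ≤ K ^ (γ - 1) :=
    (tendsto_rpow_atTop (by linarith)).eventually_ge_atTop _
  have ev2 : ∀ᶠ K : ℝ in atTop, 16 * (γ - 1) * E ^ 2 ≤ K ^ (γ + (2 * α - 1)) :=
    (tendsto_rpow_atTop (by linarith)).eventually_ge_atTop _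
  have ev3 : ∀ᶠ K : ℝ in atTop, ρb + 1 ≤ K := eventually_ge_atTop _
  obtain ⟨K, h1, h2, h3⟩ := (ev1.and (ev2.and ev3)).exists
  have hK0 : 0 < K := by linarith
  have hK1 : 1 ≤ K := by linarith
  have hKg : K ^ γ = K * K ^ (γ - 1) := by
    rw [← Real.rpow_one_add' hK0.le (by linarith)]
    norm_num
  have hb1 : (0:ℝ) ≤ ρb ^ γ := (Real.rpow_pos_of_pos hρb _).le
  have hb2 : (0:ℝ) ≤ γ * ρb ^ (γ - 1) :=
    mul_nonneg (by linarith) (Real.rpow_pos_of_pos hρb _).le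
  have claimA : ρb ^ γ + γ * ρb ^ (γ - 1) * (K - ρb) ≤ K ^ γ / 2 := by
    nlinarith [mul_le_mul_of_nonneg_left h1 hK0.le]
  refine ⟨K, h3, ?_, ?_⟩
  · rw [div_le_div_iff₀ (by positivity) h4]
    nlinarith
  · have hKmpos : (0:ℝ) < K ^ (2 * α - 1) := Real.rpow_pos_of_pos hK0 _
    have hKadd : K ^ (γ + (2 * α - 1)) = K ^ γ * K ^ (2 * α - 1) := Real.rpow_add hK0 _ _
    have step1 : 8 * E ^ 2 ≤ K ^ γ / (2 * (γ - 1)) * K ^ (2 * α - 1) := by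
      rw [div_mul_eq_mul_div, ← hKadd, le_div_iff₀ (by positivity)]
      linarith
    refine step1.trans ?_
    apply mul_le_mul_of_nonneg_right ?_ hKmpos.le
    rw [div_le_div_iff₀ (by positivity) h4]
    nlinarith

lemma sq_bound {ε u : ℝ} (hε : 0 < ε) : u ≤ ε / 2 * u ^ 2 + 1 / (2 * ε) := by
  have h3 : u ≤ (ε ^ 2 * u ^ 2 + 1) / (2 * ε) := by
    rw [le_div_iff₀ (by positivity)]
    nlinarith [sq_nonneg (ε * u - 1)]
  have h4 : (ε ^ 2 * u ^ 2 + 1) / (2 * ε) = ε / 2 * u ^ 2 + 1 / (2 * ε) := by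
    field_simp
  linarith

/-- Uniform upper bound for the density (Lemma 3.2, case `ρ̄ > 0`, `0 < α < 1/2`):
the energy and Bresch–Desjardins entropy bounds imply a uniform upper bound on `ρ`. -/
theorem stmt6 (γ α ρb E : ℝ) (hγ : 1 < γ) (hα0 : 0 < α) (hα : α < 1 / 2)
    (hρb : 0 < ρb) (hE : 0 < E) :
    ∃ C > 0, ∀ ρ : ℝ → ℝ, ContDiff ℝ 1 ρ → (∀ x, 0 < ρ x) →
      Tendsto ρ atBot (nhds ρb) →
      Integrable (fun x => ρ x * psi γ (ρ x) ρb) →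
      (∫ x, ρ x * psi γ (ρ x) ρb) ≤ E →
      Integrable (fun x => (deriv (fun y => ρ y ^ (α - 1 / 2)) x) ^ 2) →
      (∫ x, (deriv (fun y => ρ y ^ (α - 1 / 2)) x) ^ 2) ≤ E →
      ∀ x, ρ x ≤ C := by
  obtain ⟨K, hK1, hKδ, hKE⟩ := exists_K γ α ρb E hγ hα0 hρb hE
  set δ := (K ^ γ - ρb ^ γ - γ * ρb ^ (γ - 1) * (K - ρb)) / (γ - 1) with hδ_def
  have hK0 : 0 < K := by linarith
  have hδ : 0 < δ := lt_of_lt_of_le (div_pos (Real.rpow_pos_of_pos hK0 _) (by linarith)) hKδ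
  set m := α - 1 / 2 with hm_def
  have hm : m < 0 := by rw [hm_def]; linarith
  have hm0 : m ≠ 0 := hm.ne
  have hKm : 0 < K ^ m := Real.rpow_pos_of_pos hK0 m
  set C := (K ^ m / 2) ^ m⁻¹ with hC_def
  have hC : 0 < C := Real.rpow_pos_of_pos (by positivity) _
  have hCm : C ^ m = K ^ m / 2 := Real.rpow_inv_rpow (by positivity) hm0
  refine ⟨C, hC, ?_⟩
  intro ρ hρ hρpos _ hInt1 hE1 hInt2 hE2 x₀
  by_contra hcon
  push_neg at hcon
  set ε := K ^ m / (2 * E) with hε_def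
  have hε : 0 < ε := by positivity
  set L := 2 * E / δ with hL_def
  have hL : 0 < L := by positivity
  -- derivative facts
  have hρd : ∀ x, HasDerivAt ρ (deriv ρ x) x := fun x =>
    (hρ.differentiable one_ne_zero x).hasDerivAt
  have hw : ∀ x, HasDerivAt (fun y => ρ y ^ m) (deriv ρ x * m * ρ x ^ (m - 1)) x :=
    fun x => (hρd x).rpow_const (Or.inl (hρpos x).ne')
  have hwc : Continuous (deriv (fun y => ρ y ^ m)) := by
    have heq : (deriv (fun y => ρ y ^ m)) = fun x => deriv ρ x * m * ρ x ^ (m - 1) :=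
      funext fun x => (hw x).deriv
    rw [heq]
    exact ((hρ.continuous_deriv le_rfl).mul continuous_const).mul
      (hρ.continuous.rpow_const fun x => Or.inl (hρpos x).ne')
  set W' := deriv (fun y => ρ y ^ m) with hW'_def
  -- numeric bounds
  have hK2 : K ^ m * K ^ m = K ^ (2 * α - 1) := by
    rw [← Real.rpow_add hK0]; congr 1; rw [hm_def]; ring
  have e3 : ε / 2 * E = K ^ m / 4 := by
    rw [hε_def]; field_simp; ring
  have e4 : L * (1 / (2 * ε)) ≤ K ^ m / 4 := by
    have hLe : L * (1 / (2 * ε)) = 2 * E ^ 2 / (δ * K ^ m) := by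
      rw [hL_def, hε_def]; field_simp
    rw [hLe, div_le_div_iff₀ (by positivity) (by norm_num : (0:ℝ) < 4)]
    nlinarith [hKE, hK2, hδ.le]
  -- key pointwise bound on the interval
  have key : ∀ b, x₀ ≤ b → b ≤ x₀ + L → ρ b ^ m ≤ K ^ m := by
    intro b hb1 hb2
    have hftc : ∫ t in x₀..b, W' t = ρ b ^ m - ρ x₀ ^ m :=
      intervalIntegral.integral_deriv_eq_sub (fun x _ => (hw x).differentiableAt)
        (hwc.intervalIntegrable _ _)
    have hsq : ∫ t in x₀..b, (W' t) ^ 2 ≤ E := by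
      rw [intervalIntegral.integral_of_le hb1]
      exact le_trans
        (setIntegral_le_integral hInt2 (ae_of_all _ fun t => sq_nonneg _)) hE2
    have hmono : ∫ t in x₀..b, W' t ≤
        ∫ t in x₀..b, (ε / 2 * (W' t) ^ 2 + 1 / (2 * ε)) := by
      apply intervalIntegral.integral_mono_on hb1 (hwc.intervalIntegrable _ _)
        (((continuous_const.mul (hwc.pow 2)).add continuous_const).intervalIntegrable _ _)
      intro t _
      exact sq_bound hε
    have hsum : ∫ t in x₀..b, (ε / 2 * (W' t) ^ 2 + 1 / (2 * ε)) =
        ε / 2 * (∫ t in x₀..b, (W' t) ^ 2) + (b - x₀) * (1 / (2 * ε)) := by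
      rw [intervalIntegral.integral_add (f := fun t => ε / 2 * (W' t) ^ 2)
          ((continuous_const.mul (hwc.pow 2)).intervalIntegrable _ _)
          intervalIntegrable_const,
        intervalIntegral.integral_const_mul, intervalIntegral.integral_const,
        smul_eq_mul]
    rw [hsum] at hmono
    have h1 : ε / 2 * (∫ t in x₀..b, (W' t) ^ 2) ≤ K ^ m / 4 := by
      calc ε / 2 * (∫ t in x₀..b, (W' t) ^ 2) ≤ ε / 2 * E :=
            mul_le_mul_of_nonneg_left hsq (by positivity)
        _ = K ^ m / 4 := e3
    have h2 : (b - x₀) * (1 / (2 * ε)) ≤ K ^ m / 4 := by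
      refine le_trans ?_ e4
      exact mul_le_mul_of_nonneg_right (by linarith) (by positivity)
    have hint : ∫ t in x₀..b, W' t ≤ K ^ m / 2 := by linarith
    have hx0 : ρ x₀ ^ m < K ^ m / 2 := by
      have := Real.rpow_lt_rpow_of_neg hC hcon hm
      rwa [hCm] at this
    rw [hftc] at hint
    linarith
  have hρK : ∀ b, b ∈ Set.Icc x₀ (x₀ + L) → K ≤ ρ b := by
    intro b hb
    by_contra hlt
    push_neg at hlt
    exact absurd (key b hb.1 hb.2)
      (not_le.2 (Real.rpow_lt_rpow_of_neg (hρpos b) hlt hm))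
  -- energy contradiction
  have hnn : ∀ y, 0 ≤ ρ y * psi γ (ρ y) ρb := fun y => by
    rw [psi_eq hγ _ (hρpos y)]; exact g_nonneg hγ hρb (hρpos y).le
  have hup : ∫ y in Set.Ioc x₀ (x₀ + L), ρ y * psi γ (ρ y) ρb ≤ E :=
    le_trans (setIntegral_le_integral hInt1 (ae_of_all _ hnn)) hE1
  have hlow : δ * L ≤ ∫ y in Set.Ioc x₀ (x₀ + L), ρ y * psi γ (ρ y) ρb := by
    have hconst := setIntegral_ge_of_const_le (μ := volume) (c := δ)
      measurableSet_Ioc measure_Ioc_lt_top.ne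
      (fun y hy => by
        rw [psi_eq hγ _ (hρpos y)]
        exact le_trans (g_mono hγ hρb (by linarith) (hρK y (Set.Ioc_subset_Icc_self hy)))
          le_rfl) hInt1.integrableOn
    rw [Real.volume_real_Ioc, add_sub_cancel_left, max_eq_left hL.le, smul_eq_mul] at hconst
    linarith
  have hδL : δ * L = 2 * E := by
    rw [hL_def]; field_simp
  linarith
end

section
/- Let γ > 1, 0 < α < 1/2 and E > 0. There exists a constant C > 0, depending only on γ, α and E, with the following property: if ρ : ℝ → ℝ is continuously differentiable, ρ(x) > 0 for all x, lim_{x→−∞} ρ(x) = 0, ∫_ℝ ρ(x)^γ dx ≤ E and ∫_ℝ ( (ρ^{α−1/2})'(x) )² dx ≤ E, then ρ(x) ≤ C for all x ∈ ℝ. -/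
open Real MeasureTheory Filter

/-- Uniform upper bound for the density (Lemma 3.2, vacuum far-field state
`ρ̄ = 0`, `0 < α < 1/2`). -/
theorem stmt8 (γ α E : ℝ) (hγ : 1 < γ) (hα0 : 0 < α) (hα : α < 1 / 2) (hE : 0 < E) :
    ∃ C > 0, ∀ ρ : ℝ → ℝ, ContDiff ℝ 1 ρ → (∀ x, 0 < ρ x) →
      Tendsto ρ atBot (nhds 0) →
      Integrable (fun x => ρ x ^ γ) →
      (∫ x, ρ x ^ γ) ≤ E →
      Integrable (fun x => (deriv (fun y => ρ y ^ (α - 1 / 2)) x) ^ 2) →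
      (∫ x, (deriv (fun y => ρ y ^ (α - 1 / 2)) x) ^ 2) ≤ E →
      ∀ x, ρ x ≤ C := by
  set θ : ℝ := γ / 2 + α - 1 / 2 with hθdef
  have hθ : 0 < θ := by simp only [hθdef]; nlinarith
  have hαne : α - 1 / 2 ≠ 0 := by intro h; nlinarith
  set c : ℝ := θ / (α - 1 / 2) with hcdef
  have hcne : c ≠ 0 := div_ne_zero hθ.ne' hαne
  have hcE : 0 < |c| * E := mul_pos (abs_pos.2 hcne) hE
  clear_value c θ
  refine ⟨(|c| * E) ^ (1 / θ), Real.rpow_pos_of_pos hcE _, ?_⟩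
  intro ρ hρ hpos hlim hint1 hE1 hint2 hE2 x
  have hρd : ∀ t, HasDerivAt ρ (deriv ρ t) t :=
    fun t => (hρ.differentiable one_ne_zero t).hasDerivAt
  -- derivative of ρ ^ (α - 1/2)
  have hv : ∀ t, HasDerivAt (fun y => ρ y ^ (α - 1 / 2))
      (deriv ρ t * (α - 1 / 2) * ρ t ^ (α - 1 / 2 - 1)) t :=
    fun t => (hρd t).rpow_const (Or.inl (hpos t).ne')
  have hvd : ∀ t, deriv (fun y => ρ y ^ (α - 1 / 2)) t
      = deriv ρ t * (α - 1 / 2) * ρ t ^ (α - 1 / 2 - 1) := fun t => (hv t).deriv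
  -- w = ρ ^ θ and its derivative h
  set w : ℝ → ℝ := fun y => ρ y ^ θ with hwdef
  set h : ℝ → ℝ := fun t => deriv ρ t * θ * ρ t ^ (θ - 1) with hhdef
  have hw : ∀ t, HasDerivAt w (h t) t :=
    fun t => (hρd t).rpow_const (Or.inl (hpos t).ne')
  -- key identity : h t = c * ρ t ^ (γ/2) * v' t
  have key : ∀ t, h t = c * ρ t ^ (γ / 2) * deriv (fun y => ρ y ^ (α - 1 / 2)) t := by
    intro t
    have e1 : ρ t ^ (γ / 2) * ρ t ^ (α - 1 / 2 - 1) = ρ t ^ (θ - 1) := by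
      rw [← Real.rpow_add (hpos t)]; congr 1; rw [hθdef]; ring
    have e2 : c * (α - 1 / 2) = θ := by rw [hcdef]; exact div_mul_cancel₀ _ hαne
    simp only [hhdef]
    rw [hvd t, ← e1]
    linear_combination -deriv ρ t * ρ t ^ (γ / 2) * ρ t ^ (α - 1 / 2 - 1) * e2
  -- the dominating function g
  set g : ℝ → ℝ := fun t =>
    |c| / 2 * (ρ t ^ γ + (deriv (fun y => ρ y ^ (α - 1 / 2)) t) ^ 2) with hgdef
  have hg0 : ∀ t, 0 ≤ g t := by
    intro t
    have := Real.rpow_nonneg (hpos t).le γ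
    have := sq_nonneg (deriv (fun y => ρ y ^ (α - 1 / 2)) t)
    have := abs_nonneg c
    positivity
  have hbound : ∀ t, h t ≤ g t := by
    intro t
    have ha : (0:ℝ) ≤ ρ t ^ (γ / 2) := Real.rpow_nonneg (hpos t).le _
    have ha2 : (ρ t ^ (γ / 2)) ^ 2 = ρ t ^ γ := by
      rw [sq, ← Real.rpow_add (hpos t)]; ring_nf
    set a := ρ t ^ (γ / 2)
    set b := deriv (fun y => ρ y ^ (α - 1 / 2)) t
    have hab : c * a * b ≤ |c| / 2 * (a ^ 2 + b ^ 2) := by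
      nlinarith [mul_nonneg (abs_nonneg c) (sq_nonneg (a - b)),
        mul_nonneg (abs_nonneg c) (sq_nonneg (a + b)),
        le_abs_self c, neg_abs_le c]
    calc h t = c * a * b := key t
      _ ≤ |c| / 2 * (a ^ 2 + b ^ 2) := hab
      _ = g t := by rw [ha2]
  have hgint : Integrable g := (hint1.add hint2).const_mul _
  have hIg : ∫ t, g t ≤ |c| * E := by
    have : ∫ t, g t = |c| / 2 * ((∫ t, ρ t ^ γ)
        + ∫ t, (deriv (fun y => ρ y ^ (α - 1 / 2)) t) ^ 2) := by
      simp only [hgdef]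
      rw [integral_const_mul, integral_add hint1 hint2]
    rw [this]
    have h2 : (∫ t, ρ t ^ γ) + (∫ t, (deriv (fun y => ρ y ^ (α - 1 / 2)) t) ^ 2)
        ≤ E + E := add_le_add hE1 hE2
    nlinarith [abs_nonneg c]
  -- continuity of h
  have hρ' : Continuous (deriv ρ) := (hρ.continuous_deriv le_rfl)
  have hhcont : Continuous h := by
    apply (hρ'.mul continuous_const).mul
    exact continuous_iff_continuousAt.2 fun t =>
      (Real.continuousAt_rpow_const _ _ (Or.inl (hpos t).ne')).comp
        (hρ.continuous.continuousAt)
  -- for every y ≤ x : w x ≤ w y + |c| * E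
  have hwy : ∀ y, y ≤ x → w x ≤ w y + |c| * E := by
    intro y hy
    have hih : IntervalIntegrable h volume y x := hhcont.intervalIntegrable y x
    have hig : IntervalIntegrable g volume y x := hgint.intervalIntegrable
    have hFTC : ∫ t in y..x, h t = w x - w y :=
      intervalIntegral.integral_eq_sub_of_hasDerivAt (fun t _ => hw t) hih
    have h1 : ∫ t in y..x, h t ≤ ∫ t in y..x, g t :=
      intervalIntegral.integral_mono_on hy hih hig fun t _ => hbound t
    have h2 : ∫ t in y..x, g t ≤ ∫ t, g t := by
      rw [intervalIntegral.integral_of_le hy]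
      exact setIntegral_le_integral hgint (ae_of_all _ hg0)
    linarith
  -- w tends to 0 at -∞
  have hwlim : Tendsto w atBot (nhds 0) := by
    have hc : ContinuousAt (fun s : ℝ => s ^ θ) 0 :=
      Real.continuousAt_rpow_const 0 θ (Or.inr hθ.le)
    have := hc.tendsto.comp hlim
    simpa [Real.zero_rpow hθ.ne', Function.comp_def] using this
  have hwx : w x ≤ |c| * E := by
    have ht : Tendsto (fun y => w y + |c| * E) atBot (nhds (0 + |c| * E)) :=
      hwlim.add tendsto_const_nhds
    rw [zero_add] at ht
    exact ge_of_tendsto ht ((eventually_le_atBot x).mono fun y hy => hwy y hy)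
  -- conclude
  have hρx : ρ x = (ρ x ^ θ) ^ (1 / θ) := by
    rw [one_div, Real.rpow_rpow_inv (hpos x).le hθ.ne']
  rw [hρx]
  exact Real.rpow_le_rpow (Real.rpow_nonneg (hpos x).le _) hwx (by positivity)
end

section
/- Let γ > 1, α > 1/2, ρ̄ > 0 and E > 0. There exists a constant C > 0, depending only on γ, α, ρ̄ and E, with the following property: if ρ : ℝ → ℝ is continuously differentiable, ρ(x) > 0 for all x, lim_{x→−∞} ρ(x) = ρ̄, ∫_ℝ ρ(x)·Ψ(ρ(x), ρ̄) dx ≤ E and ∫_ℝ ( (ρ^{α−1/2})'(x) )² dx ≤ E, then ρ(x) ≤ C for all x ∈ ℝ. -/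
open Real MeasureTheory Filter

set_option maxHeartbeats 2000000 in
/-- Uniform upper bound for the density (Lemma 3.4): valid for all `α > 1/2`
and `γ > 1`. -/
theorem stmt9 (γ α ρb E : ℝ) (hγ : 1 < γ) (hα : 1 / 2 < α)
    (hρb : 0 < ρb) (hE : 0 < E) :
    ∃ C > 0, ∀ ρ : ℝ → ℝ, ContDiff ℝ 1 ρ → (∀ x, 0 < ρ x) →
      Tendsto ρ atBot (nhds ρb) →
      Integrable (fun x => ρ x * psi γ (ρ x) ρb) →
      (∫ x, ρ x * psi γ (ρ x) ρb) ≤ E →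
      Integrable (fun x => (deriv (fun y => ρ y ^ (α - 1 / 2)) x) ^ 2) →
      (∫ x, (deriv (fun y => ρ y ^ (α - 1 / 2)) x) ^ 2) ≤ E →
      ∀ x, ρ x ≤ C := by
  have hγ1 : (0:ℝ) < γ - 1 := by linarith
  set β : ℝ := α - 1 / 2 with hβdef
  have hβ : 0 < β := by simp only [hβdef]; linarith
  -- tangent line inequality for rpow (Bernoulli)
  have tangent : ∀ x y : ℝ, 0 ≤ x → 0 < y →
      y ^ γ + γ * y ^ (γ - 1) * (x - y) ≤ x ^ γ := by
    intro x y hx hy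
    have h1 : (-1:ℝ) ≤ x / y - 1 := by
      have : 0 ≤ x / y := div_nonneg hx hy.le
      linarith
    have h2 := one_add_mul_self_le_rpow_one_add h1 hγ.le
    have h3 : (1 : ℝ) + (x / y - 1) = x / y := by ring
    rw [h3] at h2
    have h4 := mul_le_mul_of_nonneg_right h2 (Real.rpow_nonneg hy.le γ)
    have h5 : (x / y) ^ γ * y ^ γ = x ^ γ := by
      rw [Real.div_rpow hx hy.le, div_mul_cancel₀]
      exact (Real.rpow_pos_of_pos hy γ).ne'
    have h6 : y ^ γ = y ^ (γ - 1) * y := by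
      rw [← Real.rpow_add_one hy.ne']; ring_nf
    have hxy : (x / y - 1) * y = x - y := by field_simp
    calc y ^ γ + γ * y ^ (γ - 1) * (x - y)
        = (1 + γ * (x / y - 1)) * y ^ γ := by
          rw [h6, ← hxy]; ring
      _ ≤ (x / y) ^ γ * y ^ γ := h4
      _ = x ^ γ := h5
  -- the function G
  set G : ℝ → ℝ := fun r => r ^ γ - ρb ^ γ - γ * ρb ^ (γ - 1) * (r - ρb) with hGdef
  have hGnonneg : ∀ r : ℝ, 0 ≤ r → 0 ≤ G r := by
    intro r hr
    have := tangent r ρb hr hρb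
    simp only [hGdef]; linarith
  have hpsi : ∀ r : ℝ, r ≠ 0 → r * psi γ r ρb = G r / (γ - 1) := by
    intro r hr
    simp only [psi, hGdef]
    field_simp
  -- Bernoulli strict at s = 1
  have hbern : (1:ℝ) + γ < 2 ^ γ := by
    have := one_add_mul_self_lt_rpow_one_add (s := (1:ℝ)) (by norm_num) (by norm_num) hγ
    norm_num at this
    linarith
  set m : ℝ := (2 ^ γ - 1 - γ) * ρb ^ γ with hmdef
  have hm : 0 < m := by
    apply mul_pos (by linarith) (Real.rpow_pos_of_pos hρb γ)
  have hGm : ∀ r : ℝ, 2 * ρb ≤ r → m ≤ G r := by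
    intro r hr
    have hr0 : (0:ℝ) ≤ r := by linarith
    have h2b : (0:ℝ) < 2 * ρb := by linarith
    have t1 := tangent r (2 * ρb) hr0 h2b
    have hmono : ρb ^ (γ - 1) ≤ (2 * ρb) ^ (γ - 1) :=
      Real.rpow_le_rpow hρb.le (by linarith) (by linarith)
    have h2g : (2 * ρb) ^ γ = 2 ^ γ * ρb ^ γ :=
      Real.mul_rpow (by norm_num) hρb.le
    have hsplit : ρb ^ γ = ρb ^ (γ - 1) * ρb := by
      rw [← Real.rpow_add_one hρb.ne']; ring_nf
    have hγpos : (0:ℝ) < γ := by linarith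
    have key : γ * ρb ^ (γ - 1) * (r - 2 * ρb) ≤ γ * (2 * ρb) ^ (γ - 1) * (r - 2 * ρb) := by
      apply mul_le_mul_of_nonneg_right _ (by linarith)
      exact mul_le_mul_of_nonneg_left hmono hγpos.le
    simp only [hGdef, hmdef]
    nlinarith [t1, key, h2g, hsplit]
  -- constants
  set c : ℝ := m / (γ - 1) with hcdef
  have hc : 0 < c := div_pos hm hγ1
  set L : ℝ := (E + 1) / c with hLdef
  have hL : 0 < L := div_pos (by linarith) hc
  set B : ℝ := (2 * ρb) ^ β + Real.sqrt (L * E) with hBdef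
  have hB : 0 < B := by
    have : (0:ℝ) < (2 * ρb) ^ β := Real.rpow_pos_of_pos (by linarith) β
    have := Real.sqrt_nonneg (L * E)
    simp only [hBdef]; linarith
  refine ⟨B ^ (1 / β), Real.rpow_pos_of_pos hB _, ?_⟩
  intro ρ hρ hρpos _ hint1 hE1 hint2 hE2 x₀
  by_contra hcon
  push_neg at hcon
  set C : ℝ := B ^ (1 / β) with hCdef
  -- basic facts about f = ρ ^ β
  set f : ℝ → ℝ := fun y => ρ y ^ β with hfdef
  have hρd : Differentiable ℝ ρ := hρ.differentiable one_ne_zero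
  have hρc : Continuous ρ := hρ.continuous
  have hρdc : Continuous (deriv ρ) := hρ.continuous_deriv le_rfl
  have hdf : ∀ x, HasDerivAt f (deriv ρ x * β * ρ x ^ (β - 1)) x := by
    intro x
    exact (hρd x).hasDerivAt.rpow_const (Or.inl (hρpos x).ne')
  have hderiv : deriv f = fun x => deriv ρ x * β * ρ x ^ (β - 1) := by
    funext x; exact (hdf x).deriv
  have hcontd : Continuous (deriv f) := by
    rw [hderiv]
    exact (hρdc.mul continuous_const).mul
      (hρc.rpow_const (fun x => Or.inl (hρpos x).ne'))
  -- Cauchy–Schwarz / Hölder estimate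
  have CS : ∀ a b : ℝ, a ≤ b → (f b - f a) ^ 2 ≤ (b - a) * E := by
    intro a b hab
    rcases eq_or_lt_of_le hab with rfl | hab'
    · simp
    have hd : (0:ℝ) < b - a := by linarith
    set I : ℝ := ∫ x in a..b, (deriv f x) ^ 2 with hIdef
    have hIE : I ≤ E := by
      have h1 : I = ∫ x in Set.Ioc a b, (deriv f x) ^ 2 :=
        intervalIntegral.integral_of_le hab
      have h2 : (∫ x in Set.Ioc a b, (deriv f x) ^ 2) ≤ ∫ x, (deriv f x) ^ 2 :=
        setIntegral_le_integral hint2 (Filter.Eventually.of_forall fun x => sq_nonneg _)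
      linarith
    set c0 : ℝ := (f b - f a) / (b - a) with hc0def
    have hii : IntervalIntegrable (deriv f) volume a b := hcontd.intervalIntegrable a b
    have hii2 : IntervalIntegrable (fun x => (deriv f x) ^ 2) volume a b :=
      ((hcontd.pow 2)).intervalIntegrable a b
    have hftc : (∫ x in a..b, deriv f x) = f b - f a :=
      intervalIntegral.integral_deriv_eq_sub (fun x _ => (hdf x).differentiableAt) hii
    have hexp : (∫ x in a..b, (deriv f x - c0) ^ 2)
        = I - 2 * c0 * (f b - f a) + c0 ^ 2 * (b - a) := by
      have heq : (fun x => (deriv f x - c0) ^ 2)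
          = fun x => (deriv f x) ^ 2 - (2 * c0) * deriv f x + c0 ^ 2 := by
        funext x; ring
      rw [heq, intervalIntegral.integral_add, intervalIntegral.integral_sub hii2,
        intervalIntegral.integral_const_mul, hftc, intervalIntegral.integral_const]
      · simp only [hIdef, smul_eq_mul]; ring
      · exact hii.const_mul _
      · exact (hii2.sub (hii.const_mul _))
      · exact intervalIntegrable_const
    have hnn : 0 ≤ ∫ x in a..b, (deriv f x - c0) ^ 2 :=
      intervalIntegral.integral_nonneg hab (fun x _ => sq_nonneg _)
    rw [hexp] at hnn
    have hc0 : c0 * (b - a) = f b - f a := by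
      simp only [hc0def]; field_simp
    nlinarith [hnn, hIE, hd]
  -- pointwise lower bound on the interval
  have hlow : ∀ x ∈ Set.Ioc x₀ (x₀ + L), 2 * ρb ≤ ρ x := by
    intro x hx
    have hx1 : x₀ ≤ x := hx.1.le
    have hx2 : x ≤ x₀ + L := hx.2
    have h1 : (f x - f x₀) ^ 2 ≤ (x - x₀) * E := CS x₀ x hx1
    have h2 : (x - x₀) * E ≤ L * E := by nlinarith
    have h1' : (f x₀ - f x) ^ 2 ≤ (x - x₀) * E := by
      rw [show (f x₀ - f x) ^ 2 = (f x - f x₀) ^ 2 by ring]; exact h1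
    have h3 : f x₀ - f x ≤ Real.sqrt (L * E) :=
      Real.le_sqrt_of_sq_le (by linarith)
    have hCβ : C ^ β = B := by
      rw [hCdef, ← Real.rpow_mul hB.le, one_div, inv_mul_cancel₀ hβ.ne', Real.rpow_one]
    have hfx₀ : B ≤ f x₀ := by
      rw [← hCβ]
      exact Real.rpow_le_rpow (Real.rpow_pos_of_pos hB _).le hcon.le hβ.le
    have h4 : (2 * ρb) ^ β ≤ f x := by
      simp only [hBdef] at hfx₀
      linarith
    simp only [hfdef] at h4
    exact (Real.rpow_le_rpow_iff (by linarith : (0:ℝ) ≤ 2 * ρb) (hρpos x).le hβ).mp h4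
  -- nonnegativity of the potential energy density
  have hnonneg : ∀ x, 0 ≤ ρ x * psi γ (ρ x) ρb := by
    intro x
    rw [hpsi _ (hρpos x).ne']
    exact div_nonneg (hGnonneg _ (hρpos x).le) hγ1.le
  -- lower bound for the energy
  have hset : c * L ≤ ∫ x in Set.Ioc x₀ (x₀ + L), ρ x * psi γ (ρ x) ρb := by
    have h := setIntegral_ge_of_const_le (μ := volume) (s := Set.Ioc x₀ (x₀ + L))
      (f := fun x => ρ x * psi γ (ρ x) ρb) (c := c) measurableSet_Ioc
      (by rw [Real.volume_Ioc]; exact ENNReal.ofReal_ne_top)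
      (fun x hx => by
        show c ≤ ρ x * psi γ (ρ x) ρb
        rw [hpsi _ (hρpos x).ne']
        exact (div_le_div_iff_of_pos_right hγ1).mpr (hGm _ (hlow x hx)))
      hint1.integrableOn
    rwa [Real.volume_real_Ioc, max_eq_left (by linarith), add_sub_cancel_left, smul_eq_mul, mul_comm] at h
  have hfull : (∫ x in Set.Ioc x₀ (x₀ + L), ρ x * psi γ (ρ x) ρb)
      ≤ ∫ x, ρ x * psi γ (ρ x) ρb :=
    setIntegral_le_integral hint1 (Filter.Eventually.of_forall hnonneg)
  have hcL : c * L = E + 1 := by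
    rw [hLdef]; field_simp
  linarith
end

section
/- Let γ > 1, ρ̄ > 0 and E > 0. There exists a constant C > 0, depending only on ρ̄ and E, with the following property: if ρ : ℝ → ℝ is continuously differentiable, ρ(x) > 0 for all x, lim_{x→−∞} ρ(x) = ρ̄, ∫_ℝ (ρ(x) − ρ̄)² dx ≤ E and ∫_ℝ ( (log ρ)'(x) )² dx ≤ E, then ρ(x) ≤ C for all x ∈ ℝ. -/
open Real MeasureTheory Filter

/-- Uniform upper bound for the density (Lemma 3.6, case `α = 1/2`, `ρ̄ > 0`);
the constant depends only on `ρ̄` and `E`, not on `γ`. -/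
theorem stmt10 (ρb E : ℝ) (hρb : 0 < ρb) (hE : 0 < E) :
    ∃ C > 0, ∀ γ : ℝ, 1 < γ → ∀ ρ : ℝ → ℝ, ContDiff ℝ 1 ρ → (∀ x, 0 < ρ x) →
      Tendsto ρ atBot (nhds ρb) →
      Integrable (fun x => (ρ x - ρb) ^ 2) →
      (∫ x, (ρ x - ρb) ^ 2) ≤ E →
      Integrable (fun x => (deriv (fun y => Real.log (ρ y)) x) ^ 2) →
      (∫ x, (deriv (fun y => Real.log (ρ y)) x) ^ 2) ≤ E →
      ∀ x, ρ x ≤ C := by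
  refine ⟨2 * ρb * Real.exp (E / ρb), by positivity, ?_⟩
  intro γ hγ ρ hρ hpos hlim hint1 hI1 hint2 hI2 x
  have hexp1 : (1:ℝ) ≤ Real.exp (E / ρb) := Real.one_le_exp (by positivity)
  by_cases hx : ρ x ≤ 2 * ρb
  · nlinarith
  push_neg at hx
  set g : ℝ → ℝ := fun z => deriv (fun y => Real.log (ρ y)) z with hgdef
  have hρdiff : Differentiable ℝ ρ := hρ.differentiable one_ne_zero
  have hd : ∀ z, HasDerivAt (fun y => Real.log (ρ y)) (deriv ρ z / ρ z) z := fun z =>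
    (hρdiff z).hasDerivAt.log (hpos z).ne'
  have hg : ∀ z, g z = deriv ρ z / ρ z := fun z => (hd z).deriv
  have hgcont : Continuous g := by
    have : Continuous fun z => deriv ρ z / ρ z :=
      (hρ.continuous_deriv le_rfl).div hρ.continuous fun z => (hpos z).ne'
    exact this.congr fun z => (hg z).symm
  -- the set of points left of x with small density
  set S : Set ℝ := {z | z ≤ x ∧ ρ z ≤ 2 * ρb} with hSdef
  have hSne : S.Nonempty := by
    have h1 : ∀ᶠ z in atBot, ρ z < 2 * ρb :=
      hlim.eventually (Filter.Tendsto.eventually_lt_const (by linarith) tendsto_id)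
    have h2 : ∀ᶠ z in atBot, z ≤ x := eventually_le_atBot x
    obtain ⟨z, hz1, hz2⟩ := (h1.and h2).exists
    exact ⟨z, hz2, hz1.le⟩
  have hSbdd : BddAbove S := ⟨x, fun z hz => hz.1⟩
  have hSclosed : IsClosed S := by
    have : S = Set.Iic x ∩ ρ ⁻¹' (Set.Iic (2 * ρb)) := by
      ext z; simp [hSdef, Set.mem_Iic]
    rw [this]
    exact isClosed_Iic.inter (isClosed_Iic.preimage hρ.continuous)
  set y : ℝ := sSup S with hydef
  have hyS : y ∈ S := hSclosed.csSup_mem hSne hSbdd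
  have hyx : y < x := by
    rcases lt_or_eq_of_le hyS.1 with h | h
    · exact h
    · exfalso; rw [h] at hyS; linarith [hyS.2]
  have hbig : ∀ z ∈ Set.Ioc y x, 2 * ρb ≤ ρ z := by
    intro z hz
    by_contra h
    push_neg at h
    exact absurd (le_csSup hSbdd ⟨hz.2, h.le⟩) (not_le.2 hz.1)
  -- Step A : length bound
  have hA : (x - y) * ρb ^ 2 ≤ E := by
    have hpt : ∀ z ∈ Set.Ioc y x, (ρb : ℝ) ^ 2 ≤ (ρ z - ρb) ^ 2 := by
      intro z hz
      have := hbig z hz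
      nlinarith
    have h1 : ∫ z in Set.Ioc y x, ρb ^ 2 ≤ ∫ z in Set.Ioc y x, (ρ z - ρb) ^ 2 :=
      setIntegral_mono_on (integrableOn_const measure_Ioc_lt_top.ne)
        hint1.integrableOn measurableSet_Ioc hpt
    have h2 : ∫ z in Set.Ioc y x, (ρ z - ρb) ^ 2 ≤ ∫ z, (ρ z - ρb) ^ 2 :=
      setIntegral_le_integral hint1 (ae_of_all _ fun z => sq_nonneg _)
    have h3 : ∫ z in Set.Ioc y x, (ρb ^ 2 : ℝ) = (x - y) * ρb ^ 2 := by
      rw [setIntegral_const, Real.volume_real_Ioc_of_le (by linarith), smul_eq_mul]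
    linarith
  -- Step B : FTC
  have hFTC : ∫ z in y..x, g z = Real.log (ρ x) - Real.log (ρ y) := by
    exact intervalIntegral.integral_deriv_eq_sub (fun z _ => (hd z).differentiableAt)
      (hgcont.intervalIntegrable y x)
  -- Step C : bound on the integral of g
  have hgsq_int : IntegrableOn (fun z => (g z) ^ 2) (Set.Ioc y x) := hint2.integrableOn
  have hgsq_le : ∫ z in Set.Ioc y x, (g z) ^ 2 ≤ E :=
    le_trans (setIntegral_le_integral hint2 (ae_of_all _ fun z => sq_nonneg _)) hI2
  have hC : ∫ z in y..x, g z ≤ E / ρb := by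
    rw [intervalIntegral.integral_of_le hyx.le]
    have hsum_int : IntegrableOn (fun z => ((g z) ^ 2 + ρb ^ 2) / (2 * ρb)) (Set.Ioc y x) := by
      exact (hgsq_int.add (integrableOn_const measure_Ioc_lt_top.ne)).div_const _
    have hmono : ∫ z in Set.Ioc y x, g z ≤
        ∫ z in Set.Ioc y x, ((g z) ^ 2 + ρb ^ 2) / (2 * ρb) := by
      refine setIntegral_mono_on (hgcont.integrableOn_Ioc) hsum_int measurableSet_Ioc
        (fun z _ => ?_)
      rw [le_div_iff₀ (by positivity)]
      nlinarith [sq_nonneg (g z - ρb)]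
    have heq : ∫ z in Set.Ioc y x, ((g z) ^ 2 + ρb ^ 2) / (2 * ρb) =
        ((∫ z in Set.Ioc y x, (g z) ^ 2) + (x - y) * ρb ^ 2) / (2 * ρb) := by
      rw [integral_div, integral_add hgsq_int (integrableOn_const measure_Ioc_lt_top.ne),
        setIntegral_const, Real.volume_real_Ioc_of_le (by linarith), smul_eq_mul]
    rw [heq] at hmono
    have : ((∫ z in Set.Ioc y x, (g z) ^ 2) + (x - y) * ρb ^ 2) / (2 * ρb) ≤ E / ρb := by
      rw [div_le_div_iff₀ (by positivity) hρb]
      nlinarith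
    linarith
  -- conclude
  have hlog : Real.log (ρ x) ≤ Real.log (2 * ρb) + E / ρb := by
    have hly : Real.log (ρ y) ≤ Real.log (2 * ρb) :=
      Real.log_le_log (hpos y) hyS.2
    linarith [hFTC ▸ hC]
  calc ρ x = Real.exp (Real.log (ρ x)) := (Real.exp_log (hpos x)).symm
    _ ≤ Real.exp (Real.log (2 * ρb) + E / ρb) := Real.exp_le_exp.2 hlog
    _ = 2 * ρb * Real.exp (E / ρb) := by
        rw [Real.exp_add, Real.exp_log (by positivity)]
end

section
/- Let γ > 1 and E > 0. There exists a constant C > 0, depending only on γ and E, with the following property: if ρ : ℝ → ℝ is continuously differentiable, ρ(x) > 0 for all x, lim_{x→−∞} ρ(x) = 0, ∫_ℝ ρ(x)^γ dx ≤ E and ∫_ℝ ( (log ρ)'(x) )² dx ≤ E, then ρ(x) ≤ C for all x ∈ ℝ. -/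
open Real MeasureTheory Filter

/-- Uniform upper bound for the density (Lemma 3.6, vacuum far-field state
`ρ̄ = 0`, viscosity exponent `α = 1/2`). -/
theorem stmt11 (γ E : ℝ) (hγ : 1 < γ) (hE : 0 < E) :
    ∃ C > 0, ∀ ρ : ℝ → ℝ, ContDiff ℝ 1 ρ → (∀ x, 0 < ρ x) →
      Tendsto ρ atBot (nhds 0) →
      Integrable (fun x => ρ x ^ γ) →
      (∫ x, ρ x ^ γ) ≤ E →
      Integrable (fun x => (deriv (fun y => Real.log (ρ y)) x) ^ 2) →
      (∫ x, (deriv (fun y => Real.log (ρ y)) x) ^ 2) ≤ E →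
      ∀ x, ρ x ≤ C := by
  have hγ0 : (0:ℝ) < γ := by linarith
  set p : ℝ := γ / 2 with hpdef
  have hp : 0 < p := by positivity
  refine ⟨(γ * E / 2) ^ (2 / γ), by positivity, ?_⟩
  intro ρ hρC1 hρpos hρ0 hint1 hE1 hint2 hE2 x
  have hρd : ∀ y, HasDerivAt ρ (deriv ρ y) y := fun y =>
    ((hρC1.differentiable one_ne_zero) y).hasDerivAt
  set g : ℝ → ℝ := fun y => deriv (fun z => Real.log (ρ z)) y with hgdef
  have hg : ∀ y, g y = deriv ρ y / ρ y := fun y => by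
    have := ((hρd y).log (ne_of_gt (hρpos y))).deriv
    simpa [hgdef] using this
  set f : ℝ → ℝ := fun y => ρ y ^ p with hfdef
  set F : ℝ → ℝ := fun y => deriv ρ y * p * ρ y ^ (p - 1) with hFdef
  have hf : ∀ y, HasDerivAt f (F y) y := fun y =>
    (hρd y).rpow_const (Or.inl (ne_of_gt (hρpos y)))
  have hFalt : ∀ y, F y = p * ρ y ^ p * g y := fun y => by
    rw [hg y]
    show deriv ρ y * p * ρ y ^ (p - 1) = p * ρ y ^ p * (deriv ρ y / ρ y)
    rw [Real.rpow_sub_one (ne_of_gt (hρpos y))]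
    field_simp
  -- majorant
  have hbound : ∀ y, |F y| ≤ p / 2 * (ρ y ^ γ + g y ^ 2) := by
    intro y
    rw [hFalt y]
    have h1 : |p * ρ y ^ p * g y| = p * (ρ y ^ p * |g y|) := by
      rw [abs_mul, abs_mul, abs_of_nonneg hp.le,
        abs_of_nonneg (Real.rpow_nonneg (hρpos y).le p), mul_assoc]
    rw [h1]
    have h2 : ρ y ^ p * |g y| ≤ (ρ y ^ γ + g y ^ 2) / 2 := by
      have amgm : ρ y ^ p * |g y| ≤ ((ρ y ^ p) ^ 2 + |g y| ^ 2) / 2 := by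
        nlinarith [sq_nonneg (ρ y ^ p - |g y|)]
      have : (ρ y ^ p) ^ 2 = ρ y ^ γ := by
        rw [← Real.rpow_natCast (ρ y ^ p) 2, ← Real.rpow_mul (hρpos y).le]
        norm_num [hpdef]
      rw [this, sq_abs] at amgm
      exact amgm
    calc p * (ρ y ^ p * |g y|) ≤ p * ((ρ y ^ γ + g y ^ 2) / 2) :=
          mul_le_mul_of_nonneg_left h2 hp.le
      _ = p / 2 * (ρ y ^ γ + g y ^ 2) := by ring
  have hmajint : Integrable (fun y => p / 2 * (ρ y ^ γ + g y ^ 2)) :=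
    (hint1.add hint2).const_mul _
  have hFcont : Continuous F := by
    have h1 : Continuous (deriv ρ) := hρC1.continuous_deriv le_rfl
    have h2 : Continuous fun y => ρ y ^ (p - 1) :=
      hρC1.continuous.rpow_const fun y => Or.inl (ne_of_gt (hρpos y))
    exact (h1.mul continuous_const).mul h2
  have hFint : Integrable F := by
    refine hmajint.mono hFcont.aestronglyMeasurable (Filter.Eventually.of_forall fun y => ?_)
    have hX : (0:ℝ) ≤ ρ y ^ γ + g y ^ 2 :=
      add_nonneg (Real.rpow_nonneg (hρpos y).le γ) (sq_nonneg _)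
    simpa [Real.norm_eq_abs, abs_of_nonneg hp.le, abs_of_nonneg hX] using hbound y
  -- limit of f at -∞
  have hf0 : Tendsto f atBot (nhds 0) := by
    have hc : ContinuousAt (fun t : ℝ => t ^ p) 0 :=
      Real.continuousAt_rpow_const 0 p (Or.inr hp.le)
    have := hc.tendsto.comp hρ0
    simpa [hfdef, Function.comp_def, Real.zero_rpow hp.ne'] using this
  -- FTC
  have hFTC : ∫ y in Set.Iic x, F y = f x - 0 :=
    integral_Iic_of_hasDerivAt_of_tendsto' (fun y _ => hf y) hFint.integrableOn hf0
  have key : f x ≤ γ * E / 2 := by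
    have h1 : f x = ∫ y in Set.Iic x, F y := by rw [hFTC, sub_zero]
    have h2 : |∫ y in Set.Iic x, F y| ≤ ∫ y in Set.Iic x, |F y| := by
      simpa [Real.norm_eq_abs] using
        norm_integral_le_integral_norm (μ := volume.restrict (Set.Iic x)) F
    have h3 : ∫ y in Set.Iic x, |F y| ≤ ∫ y, |F y| := by
      refine setIntegral_le_integral hFint.abs (Filter.Eventually.of_forall fun y => ?_)
      exact abs_nonneg _
    have h4 : ∫ y, |F y| ≤ ∫ y, p / 2 * (ρ y ^ γ + g y ^ 2) :=
      integral_mono hFint.abs hmajint hbound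
    have h5 : ∫ y, p / 2 * (ρ y ^ γ + g y ^ 2) = p / 2 * ((∫ y, ρ y ^ γ) + ∫ y, g y ^ 2) := by
      rw [integral_const_mul, integral_add hint1 hint2]
    have h6 : p / 2 * ((∫ y, ρ y ^ γ) + ∫ y, g y ^ 2) ≤ p / 2 * (E + E) := by
      have := add_le_add hE1 hE2
      exact mul_le_mul_of_nonneg_left this (by positivity)
    have h7 : p / 2 * (E + E) = γ * E / 2 := by rw [hpdef]; ring
    calc f x ≤ |∫ y in Set.Iic x, F y| := h1 ▸ le_abs_self _
      _ ≤ ∫ y in Set.Iic x, |F y| := h2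
      _ ≤ ∫ y, |F y| := h3
      _ ≤ ∫ y, p / 2 * (ρ y ^ γ + g y ^ 2) := h4
      _ = p / 2 * ((∫ y, ρ y ^ γ) + ∫ y, g y ^ 2) := h5
      _ ≤ p / 2 * (E + E) := h6
      _ = γ * E / 2 := h7
  -- conclude
  have hmul : p * (2 / γ) = 1 := by rw [hpdef]; field_simp
  have hρx : (f x) ^ (2 / γ) = ρ x := by
    rw [hfdef, ← Real.rpow_mul (hρpos x).le, hmul, Real.rpow_one]
  calc ρ x = (f x) ^ (2 / γ) := hρx.symm
    _ ≤ (γ * E / 2) ^ (2 / γ) :=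
        Real.rpow_le_rpow (Real.rpow_nonneg (hρpos x).le p) key (by positivity)
end
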